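/- arXiv:1511.05535 — 5 statements merged into one kernel-verified Lean document; each statement's English description precedes it below -/
import Mathlib

section
/- Coefficients at the vertices (Proposition 3.5): Let k be a stepped surface obtained from fund by a finite number of allowed mutations in the T-system with principal coefficients, and let y_{(i,j),k} ∈ Trop(c) be the coefficient at the vertex (i,j) of the corresponding seed. If k(i,j) = m, k(i,j−1) = m+ε₁, k(i,j+1) = m+ε₂, k(i−1,j) = m+ε₃, k(i+1,j) = m+ε₄ with ε_ℓ ∈ {−1,1}, then y_{(i,j),k} = ( I(i,j,m−1)·J(i,j−1,m)^{[ε₁]₊}·J(i,j+1,m)^{[ε₂]₊} ) / ( J(i,j,m−1)·I(i−1,j,m)^{[ε₃]₊}·I(i+1,j,m)^{[ε₄]₊} ), which also equals ( J(i,j,m+1)·I(i−1,j,m)^{[−ε₃]₊}·I(i+1,j,m)^{[−ε₄]₊} ) / ( I(i,j,m+1)·J(i,j−1,m)^{[−ε₁]₊}·J(i,j+1,m)^{[−ε₂]₊} ), where [x]₊ = max(x,0). -/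
noncomputable section
open Classical

namespace OctahedronTSystem

/-- A stepped surface: a height function on `ℤ × ℤ` changing by exactly `1`
between lattice-adjacent points. -/
def SteppedSurface (k : ℤ × ℤ → ℤ) : Prop :=
  ∀ a b : ℤ × ℤ, |a.1 - b.1| + |a.2 - b.2| = 1 → |k a - k b| = 1

/-- The fundamental stepped surface `fund(i,j) = ((i+j) mod 2) - 1`. -/
def fund : ℤ × ℤ → ℤ := fun v => (v.1 + v.2) % 2 - 1

/-- Index type for the independent variables: `t(i,j)` on the left, `c(i,j)` on the right. -/
abbrev Var : Type := (ℤ × ℤ) ⊕ (ℤ × ℤ)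

/-- The ambient field of rational functions over `ℚ` in the independent variables
`t(i,j)` and `c(i,j)`, `(i,j) ∈ ℤ × ℤ`. -/
abbrev F : Type := FractionRing (MvPolynomial Var ℚ)

/-- The variable `t(i,j)` as an element of the ambient field. -/
def tv (v : ℤ × ℤ) : F := algebraMap (MvPolynomial Var ℚ) F (MvPolynomial.X (Sum.inl v))

/-- The variable `c(i,j)` as an element of the ambient field. -/
def cv (v : ℤ × ℤ) : F := algebraMap (MvPolynomial Var ℚ) F (MvPolynomial.X (Sum.inr v))

/-- `I(i,j,m) = ∏_{a=m+1}^{-m-1} c(i+a,j)` if `m < 0` and `1` otherwise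
(the interval `[m+1, -m-1]` is empty when `m ≥ 0`). -/
def coefI {C : Type*} [CommMonoid C] (c : ℤ × ℤ → C) (i j m : ℤ) : C :=
  ∏ a ∈ Finset.Icc (m + 1) (-m - 1), c (i + a, j)

/-- `J(i,j,m) = ∏_{a=-m}^{m} c(i,j+a)` if `m ≥ 0` and `1` otherwise
(the interval `[-m, m]` is empty when `m < 0`). -/
def coefJ {C : Type*} [CommMonoid C] (c : ℤ × ℤ → C) (i j m : ℤ) : C :=
  ∏ a ∈ Finset.Icc (-m) m, c (i, j + a)

/-- The tropical semifield `Trop(c(i,j) : (i,j) ∈ ℤ×ℤ)`: the free multiplicative abelian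
group on the symbols `c(i,j)`, written additively as finitely supported exponent
functions `(ℤ × ℤ) →₀ ℤ`. -/
abbrev TropP : Type := (ℤ × ℤ) →₀ ℤ

/-- The auxiliary (tropical) addition `⊕`: exponentwise minimum.  The multiplicative
identity `1` of the tropical semifield is `0 : TropP`. -/
def tropAdd (f g : TropP) : TropP := Finsupp.zipWith min (min_self 0) f g

/-- `I(i,j,m)` as an element of the tropical semifield (written additively). -/
def pI (i j m : ℤ) : TropP :=
  ∑ a ∈ Finset.Icc (m + 1) (-m - 1), Finsupp.single ((i + a, j) : ℤ × ℤ) (1 : ℤ)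

/-- `J(i,j,m)` as an element of the tropical semifield (written additively). -/
def pJ (i j m : ℤ) : TropP :=
  ∑ a ∈ Finset.Icc (-m) m, Finsupp.single ((i, j + a) : ℤ × ℤ) (1 : ℤ)

/-- Embedding of the tropical semifield into the ambient field `F`, sending an exponent
function to the corresponding Laurent monomial in the `c(i,j)`. -/
def embP (f : TropP) : F := ∏ v ∈ f.support, cv v ^ f v

/-- A (labelled) seed: cluster variables `x`, coefficients `y` in the tropical semifield,
and an exchange matrix `b`. -/
structure Seed where
  x : ℤ × ℤ → F
  y : ℤ × ℤ → TropP
  b : (ℤ × ℤ) → (ℤ × ℤ) → ℤ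

/-- Seed mutation `μ_v` (coefficients written additively in the tropical semifield;
`ŷ⁺ = y(v)/(y(v) ⊕ 1)` becomes `s.y v - tropAdd (s.y v) 0` and
`ŷ⁻ = 1/(y(v) ⊕ 1)` becomes `-(tropAdd (s.y v) 0)`). -/
def mutate (s : Seed) (v : ℤ × ℤ) : Seed where
  b := fun u w =>
    if u = v ∨ w = v then -s.b u w
    else s.b u w + (s.b u v).sign * max (s.b u v * s.b v w) 0
  y := fun u =>
    if u = v then -s.y v
    else s.y u + max (s.b v u) 0 • (s.y v - tropAdd (s.y v) 0)
           + max (-s.b v u) 0 • tropAdd (s.y v) 0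
  x := fun u =>
    if u = v then
      (s.x v)⁻¹ *
        (embP (s.y v - tropAdd (s.y v) 0) *
            ∏ᶠ u' : ℤ × ℤ, s.x u' ^ (max (s.b u' v) 0).toNat +
         embP (-tropAdd (s.y v) 0) *
            ∏ᶠ u' : ℤ × ℤ, s.x u' ^ (max (-s.b u' v) 0).toNat)
    else s.x u

/-- The initial seed of the T-system with principal coefficients: cluster variables
`t(i,j)`, coefficients `c(i,j)`, and the octahedron-quiver exchange matrix. -/
def initialSeed : Seed where
  x := tv
  y := fun v => Finsupp.single v 1
  b := fun u w =>
    (if (w.1 + w.2) % 2 = 0 then 1 else -1) *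
      ((if u = (w.1 - 1, w.2) then 1 else 0) + (if u = (w.1 + 1, w.2) then 1 else 0)
        - (if u = (w.1, w.2 - 1) then 1 else 0) - (if u = (w.1, w.2 + 1) then 1 else 0))

/-- `Reachable s k` : the seed `s`, with height function (stepped surface) `k`, is
obtained from the initial seed (with height function `fund`) by a finite sequence of
allowed mutations.  A mutation at `(i,j)` is allowed when the four lattice neighbours
have equal height; it is upward or downward according to that common height. -/
inductive Reachable : Seed → (ℤ × ℤ → ℤ) → Prop
  | init : Reachable initialSeed fund
  | up (s : Seed) (h : ℤ × ℤ → ℤ) (i j : ℤ) :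
      Reachable s h →
      h (i - 1, j) = h (i, j) + 1 → h (i + 1, j) = h (i, j) + 1 →
      h (i, j - 1) = h (i, j) + 1 → h (i, j + 1) = h (i, j) + 1 →
      Reachable (mutate s (i, j)) (Function.update h (i, j) (h (i, j) + 2))
  | down (s : Seed) (h : ℤ × ℤ → ℤ) (i j : ℤ) :
      Reachable s h →
      h (i - 1, j) = h (i, j) - 1 → h (i + 1, j) = h (i, j) - 1 →
      h (i, j - 1) = h (i, j) - 1 → h (i, j + 1) = h (i, j) - 1 →
      Reachable (mutate s (i, j)) (Function.update h (i, j) (h (i, j) - 2))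

lemma pI_apply (i j m : ℤ) (w : ℤ × ℤ) :
    pI i j m w = if w.2 = j ∧ m + 1 ≤ w.1 - i ∧ w.1 - i ≤ -m - 1 then 1 else 0 := by
  rw [pI, Finsupp.finset_sum_apply]
  by_cases h : w.2 = j ∧ m + 1 ≤ w.1 - i ∧ w.1 - i ≤ -m - 1
  · rw [if_pos h]
    rw [Finset.sum_eq_single (w.1 - i)]
    · have : ((i + (w.1 - i), j) : ℤ × ℤ) = w := by
        obtain ⟨a, b⟩ := w; simp at h ⊢; omega
      rw [this, Finsupp.single_apply, if_pos rfl]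
    · intro a ha hne
      rw [Finsupp.single_apply, if_neg]
      intro he; apply hne
      obtain ⟨x, y⟩ := w
      simp at he ⊢
      omega
    · intro hmem
      exact absurd (Finset.mem_Icc.mpr ⟨h.2.1, h.2.2⟩) hmem
  · rw [if_neg h]
    apply Finset.sum_eq_zero
    intro a ha
    rw [Finset.mem_Icc] at ha
    rw [Finsupp.single_apply, if_neg]
    intro he
    obtain ⟨x, y⟩ := w
    simp at he
    apply h
    simp [← he.1, ← he.2]
    omega

lemma pJ_apply (i j m : ℤ) (w : ℤ × ℤ) :
    pJ i j m w = if w.1 = i ∧ -m ≤ w.2 - j ∧ w.2 - j ≤ m then 1 else 0 := by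
  rw [pJ, Finsupp.finset_sum_apply]
  by_cases h : w.1 = i ∧ -m ≤ w.2 - j ∧ w.2 - j ≤ m
  · rw [if_pos h]
    rw [Finset.sum_eq_single (w.2 - j)]
    · have : ((i, j + (w.2 - j)) : ℤ × ℤ) = w := by
        obtain ⟨a, b⟩ := w; simp at h ⊢; omega
      rw [this, Finsupp.single_apply, if_pos rfl]
    · intro a ha hne
      rw [Finsupp.single_apply, if_neg]
      intro he; apply hne
      obtain ⟨x, y⟩ := w
      simp at he ⊢
      omega
    · intro hmem
      exact absurd (Finset.mem_Icc.mpr ⟨h.2.1, h.2.2⟩) hmem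
  · rw [if_neg h]
    apply Finset.sum_eq_zero
    intro a ha
    rw [Finset.mem_Icc] at ha
    rw [Finsupp.single_apply, if_neg]
    intro he
    obtain ⟨x, y⟩ := w
    simp at he
    apply h
    simp [← he.1, ← he.2]
    omega

lemma tropAdd_apply (f g : TropP) (w : ℤ × ℤ) : tropAdd f g w = min (f w) (g w) :=
  Finsupp.zipWith_apply ..


/-- Closed form for the exchange matrix of a stepped-surface seed. -/
def Bc (k : ℤ × ℤ → ℤ) (u w : ℤ × ℤ) : ℤ :=
  if u.2 = w.2 ∧ (u.1 = w.1 + 1 ∨ u.1 = w.1 - 1) then k u - k w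
  else if u.1 = w.1 ∧ (u.2 = w.2 + 1 ∨ u.2 = w.2 - 1) then k w - k u
  else if (u.1 = w.1 + 1 ∨ u.1 = w.1 - 1) ∧ (u.2 = w.2 + 1 ∨ u.2 = w.2 - 1) ∧ k u = k w then
    (if k (w.1, u.2) = k u + 1 then 1 else 0) - (if k (u.1, w.2) = k u + 1 then 1 else 0)
  else 0

lemma Bc_congr (k k' : ℤ × ℤ → ℤ) (u w : ℤ × ℤ) (h1 : k u = k' u) (h2 : k w = k' w)
    (h3 : (u.1 = w.1 + 1 ∨ u.1 = w.1 - 1) → (u.2 = w.2 + 1 ∨ u.2 = w.2 - 1) →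
      k (w.1, u.2) = k' (w.1, u.2) ∧ k (u.1, w.2) = k' (u.1, w.2)) :
    Bc k u w = Bc k' u w := by
  unfold Bc
  rw [h1, h2]
  by_cases hpos : (u.1 = w.1 + 1 ∨ u.1 = w.1 - 1) ∧ (u.2 = w.2 + 1 ∨ u.2 = w.2 - 1)
  · rw [(h3 hpos.1 hpos.2).1, (h3 hpos.1 hpos.2).2]
  · have hC : ¬((u.1 = w.1 + 1 ∨ u.1 = w.1 - 1) ∧ (u.2 = w.2 + 1 ∨ u.2 = w.2 - 1)
        ∧ k' u = k' w) := by tauto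
    rw [if_neg hC, if_neg hC]

/-- value of `Bc` into a vertex whose four neighbours are level. -/
lemma Bc_into (k : ℤ × ℤ → ℤ) (i j σ : ℤ)
    (hn1 : k (i-1,j) = k (i,j) + σ) (hn2 : k (i+1,j) = k (i,j) + σ)
    (hn3 : k (i,j-1) = k (i,j) + σ) (hn4 : k (i,j+1) = k (i,j) + σ)
    (a b : ℤ) :
    Bc k (a, b) (i, j) =
      if b = j ∧ (a = i + 1 ∨ a = i - 1) then σ
      else if a = i ∧ (b = j + 1 ∨ b = j - 1) then -σ else 0 := by
  unfold Bc
  dsimp only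
  by_cases c1 : b = j ∧ (a = i + 1 ∨ a = i - 1)
  · obtain ⟨rfl, ha⟩ := c1
    rw [if_pos ⟨rfl, ha⟩, if_pos ⟨rfl, ha⟩]
    rcases ha with rfl | rfl
    · rw [hn2]; ring
    · rw [hn1]; ring
  · rw [if_neg c1, if_neg c1]
    by_cases c2 : a = i ∧ (b = j + 1 ∨ b = j - 1)
    · obtain ⟨rfl, hb⟩ := c2
      rw [if_pos ⟨rfl, hb⟩, if_pos ⟨rfl, hb⟩]
      rcases hb with rfl | rfl
      · rw [hn4]; ring
      · rw [hn3]; ring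
    · rw [if_neg c2, if_neg c2]
      by_cases c3 : (a = i + 1 ∨ a = i - 1) ∧ (b = j + 1 ∨ b = j - 1) ∧ k (a, b) = k (i, j)
      · rw [if_pos c3]
        obtain ⟨ha, hb, hk⟩ := c3
        have e1 : k (i, b) = k (i,j) + σ := by rcases hb with rfl | rfl; exacts [hn4, hn3]
        have e2 : k (a, j) = k (i,j) + σ := by rcases ha with rfl | rfl; exacts [hn2, hn1]
        rw [e1, e2, sub_self]
      · rw [if_neg c3]

/-- value of `Bc` out of a vertex whose four neighbours are level. -/
lemma Bc_outof (k : ℤ × ℤ → ℤ) (i j σ : ℤ)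
    (hn1 : k (i-1,j) = k (i,j) + σ) (hn2 : k (i+1,j) = k (i,j) + σ)
    (hn3 : k (i,j-1) = k (i,j) + σ) (hn4 : k (i,j+1) = k (i,j) + σ)
    (a b : ℤ) :
    Bc k (i, j) (a, b) =
      if j = b ∧ (i = a + 1 ∨ i = a - 1) then -σ
      else if i = a ∧ (j = b + 1 ∨ j = b - 1) then σ else 0 := by
  unfold Bc
  dsimp only
  by_cases c1 : j = b ∧ (i = a + 1 ∨ i = a - 1)
  · obtain ⟨hb, ha⟩ := c1
    subst hb
    rw [if_pos ⟨rfl, ha⟩, if_pos ⟨rfl, ha⟩]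
    rcases ha with ha | ha
    · rw [show a = i - 1 by omega, hn1]; ring
    · rw [show a = i + 1 by omega, hn2]; ring
  · rw [if_neg c1, if_neg c1]
    by_cases c2 : i = a ∧ (j = b + 1 ∨ j = b - 1)
    · obtain ⟨ha, hb⟩ := c2
      subst ha
      rw [if_pos ⟨rfl, hb⟩, if_pos ⟨rfl, hb⟩]
      rcases hb with hb | hb
      · rw [show b = j - 1 by omega, hn3]; ring
      · rw [show b = j + 1 by omega, hn4]; ring
    · rw [if_neg c2, if_neg c2]
      by_cases c3 : (i = a + 1 ∨ i = a - 1) ∧ (j = b + 1 ∨ j = b - 1) ∧ k (i, j) = k (a, b)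
      · rw [if_pos c3]
        obtain ⟨ha, hb, hk⟩ := c3
        have e1 : k (a, j) = k (i,j) + σ := by
          rcases ha with ha | ha
          · rw [show a = i - 1 by omega]; exact hn1
          · rw [show a = i + 1 by omega]; exact hn2
        have e2 : k (i, b) = k (i,j) + σ := by
          rcases hb with hb | hb
          · rw [show b = j - 1 by omega]; exact hn3
          · rw [show b = j + 1 by omega]; exact hn4
        rw [e1, e2, sub_self]
      · rw [if_neg c3]

lemma sign_max_helper (σ : ℤ) (hσ : σ = 1 ∨ σ = -1) :
    σ.sign * max (σ * σ) 0 = σ ∧ σ.sign * max (σ * -σ) 0 = 0 ∧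
    (-σ).sign * max (-σ * -σ) 0 = -σ ∧ (-σ).sign * max (-σ * σ) 0 = 0 ∧
    σ.sign * max (σ * 0) 0 = 0 ∧ (-σ).sign * max (-σ * 0) 0 = 0 := by
  rcases hσ with rfl | rfl <;> exact ⟨rfl, rfl, rfl, rfl, rfl, rfl⟩

section BMutate

variable (k k' : ℤ × ℤ → ℤ) (i j σ : ℤ)

/-- diagonal arrow creation, `u` horizontal, `w` vertical. -/
lemma bm_diag_HV (hσ : σ = 1 ∨ σ = -1)
    (hne : ∀ x y : ℤ, ¬(x = i ∧ y = j) → k' (x, y) = k (x, y))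
    (hv : k' (i, j) = k (i, j) + 2*σ) (a d : ℤ)
    (ha : a = i + 1 ∨ a = i - 1) (hd : j = d + 1 ∨ j = d - 1)
    (eu : k (a, j) = k (i,j) + σ) (ew : k (i, d) = k (i,j) + σ) :
    Bc k (a, j) (i, d) + σ = Bc k' (a, j) (i, d) := by
  unfold Bc
  dsimp only
  have cA : ¬(j = d ∧ (a = i + 1 ∨ a = i - 1)) := by omega
  have cB : ¬(a = i ∧ (j = d + 1 ∨ j = d - 1)) := by omega
  have cC : (a = i + 1 ∨ a = i - 1) ∧ (j = d + 1 ∨ j = d - 1) ∧ k (a, j) = k (i, d) := by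
    exact ⟨ha, hd, by rw [eu, ew]⟩
  have cC' : (a = i + 1 ∨ a = i - 1) ∧ (j = d + 1 ∨ j = d - 1) ∧ k' (a, j) = k' (i, d) := by
    refine ⟨ha, hd, ?_⟩
    rw [hne a j (by omega), hne i d (by omega), eu, ew]
  rw [if_neg cA, if_neg cB, if_pos cC, if_neg cA, if_neg cB, if_pos cC']
  rw [hne a j (by omega), hne a d (by omega), hv, eu]
  omega

/-- diagonal arrow creation, `u` vertical, `w` horizontal. -/
lemma bm_diag_VH (hσ : σ = 1 ∨ σ = -1)
    (hne : ∀ x y : ℤ, ¬(x = i ∧ y = j) → k' (x, y) = k (x, y))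
    (hv : k' (i, j) = k (i, j) + 2*σ) (b c : ℤ)
    (hb : b = j + 1 ∨ b = j - 1) (hc : i = c + 1 ∨ i = c - 1)
    (eu : k (i, b) = k (i,j) + σ) (ew : k (c, j) = k (i,j) + σ) :
    Bc k (i, b) (c, j) + -σ = Bc k' (i, b) (c, j) := by
  unfold Bc
  dsimp only
  have cA : ¬(b = j ∧ (i = c + 1 ∨ i = c - 1)) := by omega
  have cB : ¬(i = c ∧ (b = j + 1 ∨ b = j - 1)) := by omega
  have cC : (i = c + 1 ∨ i = c - 1) ∧ (b = j + 1 ∨ b = j - 1) ∧ k (i, b) = k (c, j) := by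
    exact ⟨hc, hb, by rw [eu, ew]⟩
  have cC' : (i = c + 1 ∨ i = c - 1) ∧ (b = j + 1 ∨ b = j - 1) ∧ k' (i, b) = k' (c, j) := by
    refine ⟨hc, hb, ?_⟩
    rw [hne i b (by omega), hne c j (by omega), eu, ew]
  rw [if_neg cA, if_neg cB, if_pos cC, if_neg cA, if_neg cB, if_pos cC']
  rw [hne c b (by omega), hne i b (by omega), hv, eu]
  omega

end BMutate

set_option maxHeartbeats 1000000 in
lemma b_mutate (k : ℤ × ℤ → ℤ) (i j σ : ℤ) (hσ : σ = 1 ∨ σ = -1)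
    (hn1 : k (i-1,j) = k (i,j) + σ) (hn2 : k (i+1,j) = k (i,j) + σ)
    (hn3 : k (i,j-1) = k (i,j) + σ) (hn4 : k (i,j+1) = k (i,j) + σ)
    (u w : ℤ × ℤ) :
    (if u = (i,j) ∨ w = (i,j) then -(Bc k u w)
      else Bc k u w + (Bc k u (i,j)).sign * max (Bc k u (i,j) * Bc k (i,j) w) 0)
    = Bc (Function.update k (i,j) (k (i,j) + 2*σ)) u w := by
  obtain ⟨k', hg⟩ : ∃ k'' : ℤ × ℤ → ℤ, Function.update k (i,j) (k (i,j) + 2*σ) = k'' :=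
    ⟨_, rfl⟩
  rw [hg]
  have hne : ∀ x y : ℤ, ¬(x = i ∧ y = j) → k' (x, y) = k (x, y) := by
    intro x y h
    rw [← hg]
    apply Function.update_of_ne
    simp only [ne_eq, Prod.mk.injEq]
    exact h
  have hv : k' (i, j) = k (i, j) + 2*σ := by
    rw [← hg]; exact Function.update_self _ _ _
  have hn1' : k' (i-1,j) = k' (i,j) + -σ := by
    rw [hne _ _ (by omega), hv, hn1]; ring
  have hn2' : k' (i+1,j) = k' (i,j) + -σ := by
    rw [hne _ _ (by omega), hv, hn2]; ring
  have hn3' : k' (i,j-1) = k' (i,j) + -σ := by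
    rw [hne _ _ (by omega), hv, hn3]; ring
  have hn4' : k' (i,j+1) = k' (i,j) + -σ := by
    rw [hne _ _ (by omega), hv, hn4]; ring
  obtain ⟨a, b⟩ := u
  obtain ⟨c, d⟩ := w
  obtain ⟨S1, S2, S3, S4, S5, S6⟩ := sign_max_helper σ hσ
  by_cases hu : ((a, b) : ℤ × ℤ) = (i, j)
  · rw [if_pos (Or.inl hu), hu]
    rw [Bc_outof k i j σ hn1 hn2 hn3 hn4 c d, Bc_outof k' i j (-σ) hn1' hn2' hn3' hn4' c d]
    split_ifs <;> ring
  · by_cases hw : ((c, d) : ℤ × ℤ) = (i, j)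
    · rw [if_pos (Or.inr hw), hw]
      rw [Bc_into k i j σ hn1 hn2 hn3 hn4 a b, Bc_into k' i j (-σ) hn1' hn2' hn3' hn4' a b]
      split_ifs <;> ring
    · rw [if_neg (by tauto)]
      rw [Prod.mk.injEq] at hu hw
      rw [Bc_into k i j σ hn1 hn2 hn3 hn4 a b, Bc_outof k i j σ hn1 hn2 hn3 hn4 c d]
      by_cases RU1 : b = j ∧ (a = i + 1 ∨ a = i - 1)
      · rw [if_pos RU1]
        obtain ⟨hbj, ha⟩ := RU1
        replace hbj := hbj.symm
        subst hbj
        by_cases RW1 : j = d ∧ (i = c + 1 ∨ i = c - 1)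
        · rw [if_pos RW1, S2, add_zero]
          refine Bc_congr k k' (a, j) (c, d) (hne a j (by omega)).symm
            (hne c d (by omega)).symm ?_
          intro h h'
          exact absurd h' (by omega)
        · rw [if_neg RW1]
          by_cases RW2 : i = c ∧ (j = d + 1 ∨ j = d - 1)
          · obtain ⟨hc, hd⟩ := RW2
            subst hc
            rw [if_pos ⟨rfl, hd⟩, S1]
            have eu : k (a, j) = k (i,j) + σ := by
              rcases ha with rfl | rfl; exacts [hn2, hn1]
            have ew : k (i, d) = k (i,j) + σ := by
              rcases hd with hd | hd
              · rw [show d = j - 1 by omega]; exact hn3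
              · rw [show d = j + 1 by omega]; exact hn4
            exact bm_diag_HV k k' i j σ hσ hne hv a d ha hd eu ew
          · rw [if_neg RW2, S5, add_zero]
            refine Bc_congr k k' (a, j) (c, d) (hne a j (by omega)).symm
              (hne c d (by omega)).symm ?_
            intro h h'
            exact ⟨(hne c j (by omega)).symm, (hne a d (by omega)).symm⟩
      · rw [if_neg RU1]
        by_cases RU2 : a = i ∧ (b = j + 1 ∨ b = j - 1)
        · rw [if_pos RU2]
          obtain ⟨hai, hb⟩ := RU2
          replace hai := hai.symm
          subst hai
          by_cases RW1 : j = d ∧ (i = c + 1 ∨ i = c - 1)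
          · obtain ⟨hdj, hc⟩ := RW1
            subst hdj
            rw [if_pos ⟨rfl, hc⟩, S3]
            have eu : k (i, b) = k (i,j) + σ := by
              rcases hb with rfl | rfl; exacts [hn4, hn3]
            have ew : k (c, j) = k (i,j) + σ := by
              rcases hc with hc | hc
              · rw [show c = i - 1 by omega]; exact hn1
              · rw [show c = i + 1 by omega]; exact hn2
            exact bm_diag_VH k k' i j σ hσ hne hv b c hb hc eu ew
          · rw [if_neg RW1]
            by_cases RW2 : i = c ∧ (j = d + 1 ∨ j = d - 1)
            · rw [if_pos RW2, S4, add_zero]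
              refine Bc_congr k k' (i, b) (c, d) (hne i b (by omega)).symm
                (hne c d (by omega)).symm ?_
              intro h h'
              exact absurd h (by omega)
            · rw [if_neg RW2, S6, add_zero]
              refine Bc_congr k k' (i, b) (c, d) (hne i b (by omega)).symm
                (hne c d (by omega)).symm ?_
              intro h h'
              exact ⟨(hne c b (by omega)).symm, (hne i d (by omega)).symm⟩
        · rw [if_neg RU2, Int.sign_zero, zero_mul, add_zero]
          refine Bc_congr k k' (a, b) (c, d) (hne a b (by omega)).symm
            (hne c d (by omega)).symm ?_
          intro h h'
          exact ⟨(hne c b (by omega)).symm, (hne a d (by omega)).symm⟩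

/-- Closed form for the coefficient at a vertex of a stepped-surface seed. -/
def Yc (k : ℤ × ℤ → ℤ) (i j : ℤ) : TropP :=
  pI i j (k (i,j) - 1) + max (k (i,j-1) - k (i,j)) 0 • pJ i (j-1) (k (i,j))
    + max (k (i,j+1) - k (i,j)) 0 • pJ i (j+1) (k (i,j))
  - (pJ i j (k (i,j) - 1) + max (k (i-1,j) - k (i,j)) 0 • pI (i-1) j (k (i,j))
    + max (k (i+1,j) - k (i,j)) 0 • pI (i+1) j (k (i,j)))

lemma upF (i j m : ℤ) :
    pI i j (m-1) + pJ i (j-1) m + pJ i (j+1) m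
      - (pJ i j (m-1) + pI (i-1) j m + pI (i+1) j m)
    = pJ i j (m+1) - pI i j (m+1) := by
  ext ⟨x, y⟩
  simp only [Finsupp.coe_add, Finsupp.coe_sub, Pi.add_apply, Pi.sub_apply, pI_apply, pJ_apply]
  by_cases hx : x = i <;> by_cases hy : y = j <;> simp [hx, hy] <;> omega

lemma keyD (i j m : ℤ) :
    pI i j (m-1) + pI i j (m+1) + pJ i (j-1) m + pJ i (j+1) m
      = pJ i j (m-1) + pJ i j (m+1) + pI (i-1) j m + pI (i+1) j m := by
  ext ⟨x, y⟩
  simp only [Finsupp.coe_add, Pi.add_apply, pI_apply, pJ_apply]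
  by_cases hx : x = i <;> by_cases hy : y = j <;> simp [hx, hy] <;> omega

lemma identA (i j m ε₁ ε₂ ε₃ ε₄ : ℤ)
    (he₁ : ε₁ = 1 ∨ ε₁ = -1) (he₂ : ε₂ = 1 ∨ ε₂ = -1)
    (he₃ : ε₃ = 1 ∨ ε₃ = -1) (he₄ : ε₄ = 1 ∨ ε₄ = -1) :
    pI i j (m - 1) + max ε₁ 0 • pJ i (j - 1) m + max ε₂ 0 • pJ i (j + 1) m
          - (pJ i j (m - 1) + max ε₃ 0 • pI (i - 1) j m + max ε₄ 0 • pI (i + 1) j m) =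
    pJ i j (m + 1) + max (-ε₃) 0 • pI (i - 1) j m + max (-ε₄) 0 • pI (i + 1) j m
          - (pI i j (m + 1) + max (-ε₁) 0 • pJ i (j - 1) m + max (-ε₂) 0 • pJ i (j + 1) m) := by
  have k1 : max (-ε₁) 0 = 1 - max ε₁ 0 := by omega
  have k2 : max (-ε₂) 0 = 1 - max ε₂ 0 := by omega
  have k3 : max (-ε₃) 0 = 1 - max ε₃ 0 := by omega
  have k4 : max (-ε₄) 0 = 1 - max ε₄ 0 := by omega
  have hD := keyD i j m
  rw [k1, k2, k3, k4]
  have expand : ∀ (a : ℤ) (p : TropP), (1 - a) • p = p - a • p := by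
    intro a p; rw [sub_smul, one_smul]
  rw [expand, expand, expand, expand]
  rw [← sub_eq_zero]
  rw [show pI i j (m - 1) + (max ε₁ 0) • pJ i (j - 1) m + (max ε₂ 0) • pJ i (j + 1) m -
      (pJ i j (m - 1) + (max ε₃ 0) • pI (i - 1) j m + (max ε₄ 0) • pI (i + 1) j m) -
      (pJ i j (m + 1) + (pI (i-1) j m - (max ε₃ 0) • pI (i - 1) j m)
        + (pI (i+1) j m - (max ε₄ 0) • pI (i + 1) j m) -
       (pI i j (m + 1) + (pJ i (j-1) m - (max ε₁ 0) • pJ i (j - 1) m)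
        + (pJ i (j+1) m - (max ε₂ 0) • pJ i (j + 1) m)))
    = (pI i j (m-1) + pI i j (m+1) + pJ i (j-1) m + pJ i (j+1) m)
      - (pJ i j (m-1) + pJ i j (m+1) + pI (i-1) j m + pI (i+1) j m) from by abel]
  rw [hD, sub_self]

lemma min_up (i j m : ℤ) :
    tropAdd (pJ i j (m+1) - pI i j (m+1)) 0 = -pI i j (m+1) := by
  ext ⟨x, y⟩
  rw [tropAdd_apply]
  simp only [Finsupp.coe_sub, Finsupp.coe_neg, Pi.sub_apply, Pi.neg_apply,
    Finsupp.coe_zero, Pi.zero_apply, pI_apply, pJ_apply]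
  omega

lemma min_down (i j m : ℤ) :
    tropAdd (pI i j (m-1) - pJ i j (m-1)) 0 = -pJ i j (m-1) := by
  ext ⟨x, y⟩
  rw [tropAdd_apply]
  simp only [Finsupp.coe_sub, Finsupp.coe_neg, Pi.sub_apply, Pi.neg_apply,
    Finsupp.coe_zero, Pi.zero_apply, pI_apply, pJ_apply]
  omega

/-- closed form for the coefficient at a vertex all whose neighbours are higher. -/
lemma Yc_min (k : ℤ × ℤ → ℤ) (i j m : ℤ) (hm : k (i,j) = m)
    (hn1 : k (i-1,j) = m + 1) (hn2 : k (i+1,j) = m + 1)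
    (hn3 : k (i,j-1) = m + 1) (hn4 : k (i,j+1) = m + 1) :
    Yc k i j = pJ i j (m+1) - pI i j (m+1) := by
  unfold Yc
  rw [hm, hn1, hn2, hn3, hn4]
  rw [show (m + 1 - m : ℤ) ⊔ 0 = 1 by omega]
  simp only [one_smul]
  exact upF i j m

/-- closed form for the coefficient at a vertex all whose neighbours are lower. -/
lemma Yc_max (k : ℤ × ℤ → ℤ) (i j m : ℤ) (hm : k (i,j) = m)
    (hn1 : k (i-1,j) = m - 1) (hn2 : k (i+1,j) = m - 1)
    (hn3 : k (i,j-1) = m - 1) (hn4 : k (i,j+1) = m - 1) :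
    Yc k i j = pI i j (m-1) - pJ i j (m-1) := by
  unfold Yc
  rw [hm, hn1, hn2, hn3, hn4]
  rw [show (m - 1 - m : ℤ) ⊔ 0 = 0 by omega]
  simp only [zero_smul, add_zero]

section Upd

variable (k : ℤ × ℤ → ℤ) (n i j : ℤ)

private lemma upd_ne : ∀ x y : ℤ, ¬(x = i ∧ y = j) →
    Function.update k ((i,j) : ℤ × ℤ) n (x, y) = k (x, y) := by
  intro x y h
  apply Function.update_of_ne
  simp only [ne_eq, Prod.mk.injEq]
  exact h

private lemma upd_v : Function.update k ((i,j) : ℤ × ℤ) n (i, j) = n :=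
  Function.update_self _ _ _

lemma Yc_upd_N :
    Yc (Function.update k (i,j) n) i (j+1)
      = Yc k i (j+1)
        + (max (n - k (i,j+1)) 0 - max (k (i,j) - k (i,j+1)) 0) • pJ i j (k (i,j+1)) := by
  unfold Yc
  rw [show (j+1-1 : ℤ) = j by ring]
  rw [upd_ne k n i j i (j+1) (by omega), upd_v, upd_ne k n i j i (j+1+1) (by omega),
    upd_ne k n i j (i-1) (j+1) (by omega), upd_ne k n i j (i+1) (j+1) (by omega)]
  rw [sub_smul]
  abel

lemma Yc_upd_S :
    Yc (Function.update k (i,j) n) i (j-1)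
      = Yc k i (j-1)
        + (max (n - k (i,j-1)) 0 - max (k (i,j) - k (i,j-1)) 0) • pJ i j (k (i,j-1)) := by
  unfold Yc
  rw [show (j-1+1 : ℤ) = j by ring]
  rw [upd_ne k n i j i (j-1) (by omega), upd_v, upd_ne k n i j i (j-1-1) (by omega),
    upd_ne k n i j (i-1) (j-1) (by omega), upd_ne k n i j (i+1) (j-1) (by omega)]
  rw [sub_smul]
  abel

lemma Yc_upd_E :
    Yc (Function.update k (i,j) n) (i+1) j
      = Yc k (i+1) j
        - (max (n - k (i+1,j)) 0 - max (k (i,j) - k (i+1,j)) 0) • pI i j (k (i+1,j)) := by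
  unfold Yc
  rw [show (i+1-1 : ℤ) = i by ring]
  rw [upd_ne k n i j (i+1) j (by omega), upd_v, upd_ne k n i j (i+1+1) j (by omega),
    upd_ne k n i j (i+1) (j-1) (by omega), upd_ne k n i j (i+1) (j+1) (by omega)]
  rw [sub_smul]
  abel

lemma Yc_upd_W :
    Yc (Function.update k (i,j) n) (i-1) j
      = Yc k (i-1) j
        - (max (n - k (i-1,j)) 0 - max (k (i,j) - k (i-1,j)) 0) • pI i j (k (i-1,j)) := by
  unfold Yc
  rw [show (i-1+1 : ℤ) = i by ring]
  rw [upd_ne k n i j (i-1) j (by omega), upd_v, upd_ne k n i j (i-1-1) j (by omega),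
    upd_ne k n i j (i-1) (j-1) (by omega), upd_ne k n i j (i-1) (j+1) (by omega)]
  rw [sub_smul]
  abel

lemma Yc_upd_far (a b : ℤ)
    (h0 : ¬(a = i ∧ b = j)) (h1 : ¬(a = i ∧ b - 1 = j)) (h2 : ¬(a = i ∧ b + 1 = j))
    (h3 : ¬(a - 1 = i ∧ b = j)) (h4 : ¬(a + 1 = i ∧ b = j)) :
    Yc (Function.update k (i,j) n) a b = Yc k a b := by
  unfold Yc
  rw [upd_ne k n i j a b h0, upd_ne k n i j a (b-1) h1, upd_ne k n i j a (b+1) h2,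
    upd_ne k n i j (a-1) b h3, upd_ne k n i j (a+1) b h4]

end Upd

lemma adj_cases (a b c d : ℤ) (h : |a - c| + |b - d| = 1) :
    (a = c ∧ (b = d + 1 ∨ b = d - 1)) ∨ (b = d ∧ (a = c + 1 ∨ a = c - 1)) := by
  have n1 := abs_nonneg (a - c)
  have n2 := abs_nonneg (b - d)
  rcases (by omega : |a - c| = 0 ∧ |b - d| = 1 ∨ |a - c| = 1 ∧ |b - d| = 0) with
    ⟨h1, h2⟩ | ⟨h1, h2⟩
  · have e1 := abs_eq_zero.mp h1
    have e2 := (abs_eq (by norm_num : (0:ℤ) ≤ 1)).mp h2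
    left; omega
  · have e1 := (abs_eq (by norm_num : (0:ℤ) ≤ 1)).mp h1
    have e2 := abs_eq_zero.mp h2
    right; omega

lemma fund_stepped : SteppedSurface fund := by
  rintro ⟨a, b⟩ ⟨c, d⟩ h
  rcases adj_cases a b c d h with ⟨h1, h2⟩ | ⟨h1, h2⟩ <;>
  · refine (abs_eq (by norm_num : (0:ℤ) ≤ 1)).mpr ?_
    simp only [fund]
    omega

lemma stepped_update (k : ℤ × ℤ → ℤ) (hk : SteppedSurface k) (i j σ : ℤ)
    (hσ : σ = 1 ∨ σ = -1)
    (hn1 : k (i-1,j) = k (i,j) + σ) (hn2 : k (i+1,j) = k (i,j) + σ)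
    (hn3 : k (i,j-1) = k (i,j) + σ) (hn4 : k (i,j+1) = k (i,j) + σ) :
    SteppedSurface (Function.update k (i,j) (k (i,j) + 2*σ)) := by
  rintro ⟨a, b⟩ ⟨c, d⟩ h
  have hadj := adj_cases a b c d h
  have hval : ∀ x y : ℤ, ¬(x = i ∧ y = j) →
      Function.update k ((i,j) : ℤ × ℤ) (k (i,j) + 2*σ) (x, y) = k (x, y) :=
    upd_ne k _ i j
  have hvv := upd_v k (k (i,j) + 2*σ) i j
  by_cases hp : a = i ∧ b = j
  · obtain ⟨h1, h2⟩ := hp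
    replace h1 := h1.symm; subst h1
    replace h2 := h2.symm; subst h2
    rw [hvv, hval c d (by omega)]
    have e : k (c, d) = k (i, j) + σ := by
      rcases hadj with ⟨h1, h2⟩ | ⟨h1, h2⟩
      · subst h1
        rcases h2 with h2 | h2
        · rw [show d = j - 1 by omega]; exact hn3
        · rw [show d = j + 1 by omega]; exact hn4
      · subst h1
        rcases h2 with h2 | h2
        · rw [show c = i - 1 by omega]; exact hn1
        · rw [show c = i + 1 by omega]; exact hn2
    rw [e]
    refine (abs_eq (by norm_num : (0:ℤ) ≤ 1)).mpr ?_
    omega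
  · rw [hval a b hp]
    by_cases hq : c = i ∧ d = j
    · obtain ⟨h1, h2⟩ := hq
      replace h1 := h1.symm; subst h1
      replace h2 := h2.symm; subst h2
      rw [hvv]
      have e : k (a, b) = k (i, j) + σ := by
        rcases hadj with ⟨h1, h2⟩ | ⟨h1, h2⟩
        · subst h1
          rcases h2 with h2 | h2
          · rw [show b = j + 1 by omega]; exact hn4
          · rw [show b = j - 1 by omega]; exact hn3
        · subst h1
          rcases h2 with h2 | h2
          · rw [show a = i + 1 by omega]; exact hn2
          · rw [show a = i - 1 by omega]; exact hn1
      rw [e]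
      refine (abs_eq (by norm_num : (0:ℤ) ≤ 1)).mpr ?_
      omega
    · rw [hval c d hq]
      exact hk (a, b) (c, d) h

lemma base_y (i j : ℤ) : Yc fund i j = Finsupp.single ((i,j) : ℤ × ℤ) 1 := by
  by_cases hp : (i + j) % 2 = 0
  · have c0 : fund (i, j) = -1 := by simp only [fund]; omega
    have c1 : max (fund (i, j-1) - fund (i, j)) 0 = 1 := by simp only [fund]; omega
    have c2 : max (fund (i, j+1) - fund (i, j)) 0 = 1 := by simp only [fund]; omega
    have c3 : max (fund (i-1, j) - fund (i, j)) 0 = 1 := by simp only [fund]; omega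
    have c4 : max (fund (i+1, j) - fund (i, j)) 0 = 1 := by simp only [fund]; omega
    unfold Yc
    rw [c1, c2, c3, c4, c0]
    simp only [one_smul]
    ext ⟨x, y⟩
    simp only [Finsupp.coe_add, Finsupp.coe_sub, Pi.add_apply, Pi.sub_apply,
      pI_apply, pJ_apply, Finsupp.single_apply, Prod.mk.injEq]
    by_cases hx : x = i <;> by_cases hy : y = j <;> simp [hx, hy] <;> omega
  · have c0 : fund (i, j) = 0 := by simp only [fund]; omega
    have c1 : max (fund (i, j-1) - fund (i, j)) 0 = 0 := by simp only [fund]; omega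
    have c2 : max (fund (i, j+1) - fund (i, j)) 0 = 0 := by simp only [fund]; omega
    have c3 : max (fund (i-1, j) - fund (i, j)) 0 = 0 := by simp only [fund]; omega
    have c4 : max (fund (i+1, j) - fund (i, j)) 0 = 0 := by simp only [fund]; omega
    unfold Yc
    rw [c1, c2, c3, c4, c0]
    simp only [zero_smul, add_zero]
    ext ⟨x, y⟩
    simp only [Finsupp.coe_sub, Pi.sub_apply, pI_apply, pJ_apply,
      Finsupp.single_apply, Prod.mk.injEq]
    by_cases hx : x = i <;> by_cases hy : y = j <;> simp [hx, hy] <;> omega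

lemma base_b (u w : ℤ × ℤ) : initialSeed.b u w = Bc fund u w := by
  obtain ⟨a, b⟩ := u
  obtain ⟨c, d⟩ := w
  show (if (c + d) % 2 = 0 then 1 else -1) *
      ((if ((a,b) : ℤ×ℤ) = (c - 1, d) then 1 else 0) + (if ((a,b) : ℤ×ℤ) = (c + 1, d) then 1 else 0)
        - (if ((a,b) : ℤ×ℤ) = (c, d - 1) then 1 else 0)
        - (if ((a,b) : ℤ×ℤ) = (c, d + 1) then 1 else 0)) = _
  unfold Bc
  dsimp only
  simp only [Prod.mk.injEq, fund]
  by_cases hp : (c + d) % 2 = 0 <;> simp only [hp, if_true, if_false, one_mul, neg_mul, neg_sub]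
  · by_cases e1 : b = d ∧ (a = c + 1 ∨ a = c - 1)
    · rw [if_pos e1]
      rcases e1 with ⟨rfl, e | e⟩ <;> subst e <;> split_ifs <;> omega
    · rw [if_neg e1]
      by_cases e2 : a = c ∧ (b = d + 1 ∨ b = d - 1)
      · rw [if_pos e2]
        obtain ⟨e, hb⟩ := e2
        subst e
        rcases hb with e | e <;> subst e <;> split_ifs <;> omega
      · rw [if_neg e2]
        by_cases e3 : (a = c + 1 ∨ a = c - 1) ∧ (b = d + 1 ∨ b = d - 1) ∧
            (a + b) % 2 - 1 = 0 - 1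
        · rw [if_pos e3]
          obtain ⟨ha, hb, _⟩ := e3
          split_ifs <;> omega
        · rw [if_neg e3]
          split_ifs <;> omega
  · by_cases e1 : b = d ∧ (a = c + 1 ∨ a = c - 1)
    · rw [if_pos e1]
      rcases e1 with ⟨rfl, e | e⟩ <;> subst e <;> split_ifs <;> omega
    · rw [if_neg e1]
      by_cases e2 : a = c ∧ (b = d + 1 ∨ b = d - 1)
      · rw [if_pos e2]
        obtain ⟨e, hb⟩ := e2
        subst e
        rcases hb with e | e <;> subst e <;> split_ifs <;> omega
      · rw [if_neg e2]
        by_cases e3 : (a = c + 1 ∨ a = c - 1) ∧ (b = d + 1 ∨ b = d - 1) ∧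
            (a + b) % 2 - 1 = (c + d) % 2 - 1
        · refine Eq.trans ?_ (if_pos e3).symm
          obtain ⟨ha, hb, _⟩ := e3
          split_ifs <;> omega
        · refine Eq.trans ?_ (if_neg e3).symm
          split_ifs <;> omega

set_option maxHeartbeats 1000000 in
lemma reachable_inv (s : Seed) (k : ℤ × ℤ → ℤ) (h : Reachable s k) :
    SteppedSurface k ∧ (∀ u w, s.b u w = Bc k u w) ∧
      (∀ a b : ℤ, s.y (a, b) = Yc k a b) := by
  induction h with
  | init => exact ⟨fund_stepped, base_b, fun a b => (base_y a b).symm⟩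
  | up s k i j hr hw1 hw2 hw3 hw4 ih =>
      obtain ⟨hst, hbb, hyy⟩ := ih
      have hσ : (1:ℤ) = 1 ∨ (1:ℤ) = -1 := Or.inl rfl
      refine ⟨?_, ?_, ?_⟩
      · have := stepped_update k hst i j 1 hσ hw1 hw2 hw3 hw4
        rwa [show k (i,j) + 2*(1:ℤ) = k (i,j) + 2 by ring] at this
      · intro u w
        have hb' := b_mutate k i j 1 hσ hw1 hw2 hw3 hw4 u w
        rw [show k (i,j) + 2*(1:ℤ) = k (i,j) + 2 by ring] at hb'
        rw [← hb']
        show (if u = (i,j) ∨ w = (i,j) then -s.b u w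
          else s.b u w + (s.b u (i,j)).sign * max (s.b u (i,j) * s.b (i,j) w) 0) = _
        rw [hbb u w, hbb u (i,j), hbb (i,j) w]
      · intro a b
        show (if ((a,b) : ℤ × ℤ) = (i,j) then -s.y (i,j)
          else s.y (a,b) + max (s.b (i,j) (a,b)) 0 • (s.y (i,j) - tropAdd (s.y (i,j)) 0)
            + max (-s.b (i,j) (a,b)) 0 • tropAdd (s.y (i,j)) 0) = _
        rw [hyy i j, hyy a b, hbb (i,j) (a,b)]
        rw [Yc_min k i j (k (i,j)) rfl hw1 hw2 hw3 hw4]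
        rw [min_up i j (k (i,j))]
        rw [Bc_outof k i j 1 hw1 hw2 hw3 hw4 a b]
        by_cases hab : ((a,b) : ℤ × ℤ) = (i,j)
        · rw [if_pos hab]
          rw [Prod.mk.injEq] at hab
          rw [hab.1, hab.2]
          have h0 : Function.update k ((i,j) : ℤ × ℤ) (k (i,j)+2) (i,j) = k (i,j) + 2 :=
            upd_v _ _ _ _
          have h1 : Function.update k ((i,j) : ℤ × ℤ) (k (i,j)+2) (i-1,j) = (k (i,j)+2) - 1 := by
            rw [upd_ne k _ i j (i-1) j (by omega), hw1]; ring
          have h2 : Function.update k ((i,j) : ℤ × ℤ) (k (i,j)+2) (i+1,j) = (k (i,j)+2) - 1 := by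
            rw [upd_ne k _ i j (i+1) j (by omega), hw2]; ring
          have h3 : Function.update k ((i,j) : ℤ × ℤ) (k (i,j)+2) (i,j-1) = (k (i,j)+2) - 1 := by
            rw [upd_ne k _ i j i (j-1) (by omega), hw3]; ring
          have h4 : Function.update k ((i,j) : ℤ × ℤ) (k (i,j)+2) (i,j+1) = (k (i,j)+2) - 1 := by
            rw [upd_ne k _ i j i (j+1) (by omega), hw4]; ring
          rw [Yc_max (Function.update k (i,j) (k (i,j)+2)) i j (k (i,j)+2) h0 h1 h2 h3 h4]
          rw [show k (i,j) + 2 - 1 = k (i,j) + 1 by ring]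
          abel
        · rw [if_neg hab]
          rw [Prod.mk.injEq] at hab
          by_cases H : j = b ∧ (i = a + 1 ∨ i = a - 1)
          · rw [if_pos H]
            simp only [show ((-1:ℤ) ⊔ 0) = 0 from rfl, show ((-(-1:ℤ)) ⊔ 0) = 1 from rfl,
              zero_smul, one_smul, add_zero, zero_add]
            obtain ⟨hbj, hia⟩ := H
            subst hbj
            rcases hia with hia | hia
            · rw [show a = i - 1 by omega]
              rw [Yc_upd_W k (k (i,j)+2) i j, hw1]
              rw [show max (k (i,j) + 2 - (k (i,j) + 1)) 0 - max (k (i,j) - (k (i,j) + 1)) 0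
                  = 1 from by omega, one_smul]
              abel
            · rw [show a = i + 1 by omega]
              rw [Yc_upd_E k (k (i,j)+2) i j, hw2]
              rw [show max (k (i,j) + 2 - (k (i,j) + 1)) 0 - max (k (i,j) - (k (i,j) + 1)) 0
                  = 1 from by omega, one_smul]
              abel
          · rw [if_neg H]
            by_cases V : i = a ∧ (j = b + 1 ∨ j = b - 1)
            · rw [if_pos V]
              simp only [show ((1:ℤ) ⊔ 0) = 1 from rfl, show ((-(1:ℤ)) ⊔ 0) = 0 from rfl,
                zero_smul, one_smul, add_zero]
              obtain ⟨hai, hjb⟩ := V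
              subst hai
              rcases hjb with hjb | hjb
              · rw [show b = j - 1 by omega]
                rw [Yc_upd_S k (k (i,j)+2) i j, hw3]
                rw [show max (k (i,j) + 2 - (k (i,j) + 1)) 0 - max (k (i,j) - (k (i,j) + 1)) 0
                    = 1 from by omega, one_smul]
                abel
              · rw [show b = j + 1 by omega]
                rw [Yc_upd_N k (k (i,j)+2) i j, hw4]
                rw [show max (k (i,j) + 2 - (k (i,j) + 1)) 0 - max (k (i,j) - (k (i,j) + 1)) 0
                    = 1 from by omega, one_smul]
                abel
            · rw [if_neg V]
              simp only [show ((0:ℤ) ⊔ 0) = 0 from rfl, neg_zero, zero_smul, add_zero]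
              rw [Yc_upd_far k (k (i,j)+2) i j a b (by omega) (by omega) (by omega)
                (by omega) (by omega)]
  | down s k i j hr hw1 hw2 hw3 hw4 ih =>
      obtain ⟨hst, hbb, hyy⟩ := ih
      have hσ : (-1:ℤ) = 1 ∨ (-1:ℤ) = -1 := Or.inr rfl
      have hv1 : k (i-1,j) = k (i,j) + -1 := by rw [hw1]; ring
      have hv2 : k (i+1,j) = k (i,j) + -1 := by rw [hw2]; ring
      have hv3 : k (i,j-1) = k (i,j) + -1 := by rw [hw3]; ring
      have hv4 : k (i,j+1) = k (i,j) + -1 := by rw [hw4]; ring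
      refine ⟨?_, ?_, ?_⟩
      · have := stepped_update k hst i j (-1) hσ hv1 hv2 hv3 hv4
        rwa [show k (i,j) + 2*(-1:ℤ) = k (i,j) - 2 by ring] at this
      · intro u w
        have hb' := b_mutate k i j (-1) hσ hv1 hv2 hv3 hv4 u w
        rw [show k (i,j) + 2*(-1:ℤ) = k (i,j) - 2 by ring] at hb'
        rw [← hb']
        show (if u = (i,j) ∨ w = (i,j) then -s.b u w
          else s.b u w + (s.b u (i,j)).sign * max (s.b u (i,j) * s.b (i,j) w) 0) = _
        rw [hbb u w, hbb u (i,j), hbb (i,j) w]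
      · intro a b
        show (if ((a,b) : ℤ × ℤ) = (i,j) then -s.y (i,j)
          else s.y (a,b) + max (s.b (i,j) (a,b)) 0 • (s.y (i,j) - tropAdd (s.y (i,j)) 0)
            + max (-s.b (i,j) (a,b)) 0 • tropAdd (s.y (i,j)) 0) = _
        rw [hyy i j, hyy a b, hbb (i,j) (a,b)]
        rw [Yc_max k i j (k (i,j)) rfl hw1 hw2 hw3 hw4]
        rw [min_down i j (k (i,j))]
        rw [Bc_outof k i j (-1) hv1 hv2 hv3 hv4 a b]
        by_cases hab : ((a,b) : ℤ × ℤ) = (i,j)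
        · rw [if_pos hab]
          rw [Prod.mk.injEq] at hab
          rw [hab.1, hab.2]
          have h0 : Function.update k ((i,j) : ℤ × ℤ) (k (i,j)-2) (i,j) = k (i,j) - 2 :=
            upd_v _ _ _ _
          have h1 : Function.update k ((i,j) : ℤ × ℤ) (k (i,j)-2) (i-1,j) = (k (i,j)-2) + 1 := by
            rw [upd_ne k _ i j (i-1) j (by omega), hw1]; ring
          have h2 : Function.update k ((i,j) : ℤ × ℤ) (k (i,j)-2) (i+1,j) = (k (i,j)-2) + 1 := by
            rw [upd_ne k _ i j (i+1) j (by omega), hw2]; ring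
          have h3 : Function.update k ((i,j) : ℤ × ℤ) (k (i,j)-2) (i,j-1) = (k (i,j)-2) + 1 := by
            rw [upd_ne k _ i j i (j-1) (by omega), hw3]; ring
          have h4 : Function.update k ((i,j) : ℤ × ℤ) (k (i,j)-2) (i,j+1) = (k (i,j)-2) + 1 := by
            rw [upd_ne k _ i j i (j+1) (by omega), hw4]; ring
          rw [Yc_min (Function.update k (i,j) (k (i,j)-2)) i j (k (i,j)-2) h0 h1 h2 h3 h4]
          rw [show k (i,j) - 2 + 1 = k (i,j) - 1 by ring]
          abel
        · rw [if_neg hab]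
          rw [Prod.mk.injEq] at hab
          by_cases H : j = b ∧ (i = a + 1 ∨ i = a - 1)
          · rw [if_pos H]
            simp only [show ((1:ℤ) ⊔ 0) = 1 from rfl, show ((-1:ℤ) ⊔ 0) = 0 from rfl,
                show ((-(-1:ℤ)) ⊔ 0) = 1 from rfl, show ((-(1:ℤ)) ⊔ 0) = 0 from rfl,
                neg_neg, zero_smul, one_smul, add_zero, zero_add]
            obtain ⟨hbj, hia⟩ := H
            subst hbj
            rcases hia with hia | hia
            · rw [show a = i - 1 by omega]
              rw [Yc_upd_W k (k (i,j)-2) i j, hw1]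
              rw [show max (k (i,j) - 2 - (k (i,j) - 1)) 0 - max (k (i,j) - (k (i,j) - 1)) 0
                  = -1 from by omega]
              rw [neg_smul, one_smul, sub_neg_eq_add]
              abel
            · rw [show a = i + 1 by omega]
              rw [Yc_upd_E k (k (i,j)-2) i j, hw2]
              rw [show max (k (i,j) - 2 - (k (i,j) - 1)) 0 - max (k (i,j) - (k (i,j) - 1)) 0
                  = -1 from by omega]
              rw [neg_smul, one_smul, sub_neg_eq_add]
              abel
          · rw [if_neg H]
            by_cases V : i = a ∧ (j = b + 1 ∨ j = b - 1)
            · rw [if_pos V]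
              simp only [show ((1:ℤ) ⊔ 0) = 1 from rfl, show ((-1:ℤ) ⊔ 0) = 0 from rfl,
                show ((-(-1:ℤ)) ⊔ 0) = 1 from rfl, show ((-(1:ℤ)) ⊔ 0) = 0 from rfl,
                neg_neg, zero_smul, one_smul, add_zero, zero_add]
              obtain ⟨hai, hjb⟩ := V
              subst hai
              rcases hjb with hjb | hjb
              · rw [show b = j - 1 by omega]
                rw [Yc_upd_S k (k (i,j)-2) i j, hw3]
                rw [show max (k (i,j) - 2 - (k (i,j) - 1)) 0 - max (k (i,j) - (k (i,j) - 1)) 0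
                    = -1 from by omega]
                rw [neg_smul, one_smul]
              · rw [show b = j + 1 by omega]
                rw [Yc_upd_N k (k (i,j)-2) i j, hw4]
                rw [show max (k (i,j) - 2 - (k (i,j) - 1)) 0 - max (k (i,j) - (k (i,j) - 1)) 0
                    = -1 from by omega]
                rw [neg_smul, one_smul]
            · rw [if_neg V]
              simp only [show ((0:ℤ) ⊔ 0) = 0 from rfl, neg_zero, zero_smul, add_zero]
              rw [Yc_upd_far k (k (i,j)-2) i j a b (by omega) (by omega) (by omega)
                (by omega) (by omega)]

/-- **Proposition 3.5** (coefficients at the vertices).  For a seed reached from the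
initial seed of the T-system with principal coefficients, with height function `k`
satisfying `k(i,j) = m`, `k(i,j∓1) = m + ε₁/ε₂`, `k(i∓1,j) = m + ε₃/ε₄`, the coefficient
at `(i,j)` equals (written additively in the tropical semifield, division becoming
subtraction, `[x]₊ = max x 0`):
`I(i,j,m-1) J(i,j-1,m)^{[ε₁]₊} J(i,j+1,m)^{[ε₂]₊} / (J(i,j,m-1) I(i-1,j,m)^{[ε₃]₊} I(i+1,j,m)^{[ε₄]₊})`
and also
`J(i,j,m+1) I(i-1,j,m)^{[-ε₃]₊} I(i+1,j,m)^{[-ε₄]₊} / (I(i,j,m+1) J(i,j-1,m)^{[-ε₁]₊} J(i,j+1,m)^{[-ε₂]₊})`. -/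
theorem coefficient_at_vertex
    (s : Seed) (k : ℤ × ℤ → ℤ) (hreach : Reachable s k)
    (i j m ε₁ ε₂ ε₃ ε₄ : ℤ)
    (he₁ : ε₁ = 1 ∨ ε₁ = -1) (he₂ : ε₂ = 1 ∨ ε₂ = -1)
    (he₃ : ε₃ = 1 ∨ ε₃ = -1) (he₄ : ε₄ = 1 ∨ ε₄ = -1)
    (h0 : k (i, j) = m)
    (h1 : k (i, j - 1) = m + ε₁) (h2 : k (i, j + 1) = m + ε₂)
    (h3 : k (i - 1, j) = m + ε₃) (h4 : k (i + 1, j) = m + ε₄) :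
    s.y (i, j) =
        pI i j (m - 1) + max ε₁ 0 • pJ i (j - 1) m + max ε₂ 0 • pJ i (j + 1) m
          - (pJ i j (m - 1) + max ε₃ 0 • pI (i - 1) j m + max ε₄ 0 • pI (i + 1) j m) ∧
    s.y (i, j) =
        pJ i j (m + 1) + max (-ε₃) 0 • pI (i - 1) j m + max (-ε₄) 0 • pI (i + 1) j m
          - (pI i j (m + 1) + max (-ε₁) 0 • pJ i (j - 1) m + max (-ε₂) 0 • pJ i (j + 1) m) := by
  obtain ⟨hst, hbb, hyy⟩ := reachable_inv s k hreach
  have key : s.y (i, j) =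
      pI i j (m - 1) + max ε₁ 0 • pJ i (j - 1) m + max ε₂ 0 • pJ i (j + 1) m
        - (pJ i j (m - 1) + max ε₃ 0 • pI (i - 1) j m + max ε₄ 0 • pI (i + 1) j m) := by
    rw [hyy i j]
    unfold Yc
    rw [h0, h1, h2, h3, h4]
    rw [show m + ε₁ - m = ε₁ by ring, show m + ε₂ - m = ε₂ by ring,
      show m + ε₃ - m = ε₃ by ring, show m + ε₄ - m = ε₄ by ring]
  exact ⟨key, key.trans (identA i j m ε₁ ε₂ ε₃ ε₄ he₁ he₂ he₃ he₄)⟩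

end OctahedronTSystem
end
end

section
/- Square faces (Proposition prop:main, part 1): Let G = G_{p,k} be the graph with open faces associated with p and an admissible stepped surface k (with k₀ ≥ k(i₀,j₀) and k ≥ fund). If (i,j) ∈ F̊ and all four lattice-neighbors (i±1,j), (i,j±1) have the same height under k, then the face (i,j) of G is a square, i.e. it is bounded by exactly four edges, two horizontal and two vertical. -/
noncomputable section
open Classical

namespace OctahedronTSystem

/-- Edges of the bipartite graph `G_k` (the planar dual of the quiver `Q_k`), indexed by
the arrow of `Q_k` they cross:
* `h i j` : the horizontal edge dual to the vertical lattice edge from `(i,j)` to `(i,j+1)`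
  (the face `(i,j)` lies directly below it, the face `(i,j+1)` directly above it);
* `v i j` : the vertical edge dual to the horizontal lattice edge from `(i,j)` to `(i+1,j)`;
* `d i j` : the diagonal edge inside the unit square with lower-left corner `(i,j)`
  (present exactly when that square carries a diagonal arrow). -/
inductive Edge : Type
  | h : ℤ → ℤ → Edge
  | v : ℤ → ℤ → Edge
  | d : ℤ → ℤ → Edge
  deriving DecidableEq

/-- A vertex of `G_k`: a (square or triangular) face of the quiver `Q_k`, recorded as the
unit square (lower-left corner) containing it together with a Boolean: `false` for the
part containing the bottom side of the square, `true` for the part containing the top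
side (used only when the square is split by a diagonal). -/
abbrev Vtx : Type := (ℤ × ℤ) × Bool

namespace Edge

/-- The part of the square `s` touching its west side. -/
def tAD (k : ℤ × ℤ → ℤ) (s : ℤ × ℤ) : Bool := decide (k (s.1 + 1, s.2) ≠ k (s.1, s.2 + 1))

/-- The part of the square `s` touching its east side. -/
def tBC (k : ℤ × ℤ → ℤ) (s : ℤ × ℤ) : Bool := decide (k s ≠ k (s.1 + 1, s.2 + 1))

/-- Endpoints of an edge: `(left, right)` for horizontal and diagonal edges,
`(bottom, top)` for vertical ones. -/
def ends (k : ℤ × ℤ → ℤ) : Edge → Vtx × Vtx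
  | h i j => (((i - 1, j), tBC k (i - 1, j)), ((i, j), tAD k (i, j)))
  | v i j => (((i, j - 1), tAD k (i, j - 1) || tBC k (i, j - 1)), ((i, j), false))
  | d i j => (((i, j), tAD k (i, j)), ((i, j), tBC k (i, j)))

/-- `x` is an endpoint of the edge `e`. -/
def mem (k : ℤ × ℤ → ℤ) (x : Vtx) (e : Edge) : Prop :=
  x = (ends k e).1 ∨ x = (ends k e).2

/-- The edge is present in the graph `G_k` (diagonal edges exist only in squares split
by a diagonal arrow of the quiver). -/
def valid (k : ℤ × ℤ → ℤ) : Edge → Prop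
  | h _ _ => True
  | v _ _ => True
  | d i j => k (i, j) ≠ k (i + 1, j + 1) ∨ k (i + 1, j) ≠ k (i, j + 1)

/-- The edge `e` is a side of the face `f` of `G_k` (faces are indexed by the quiver
vertices `(i,j) ∈ ℤ × ℤ`; an edge is a side of the two faces corresponding to the two
endpoints of the arrow it crosses). -/
def isSide (k : ℤ × ℤ → ℤ) (f : ℤ × ℤ) : Edge → Prop
  | h i j => f = (i, j) ∨ f = (i, j + 1)
  | v i j => f = (i, j) ∨ f = (i + 1, j)
  | d i j => if tAD k (i, j) then f = (i, j) ∨ f = (i + 1, j + 1)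
             else f = (i + 1, j) ∨ f = (i, j + 1)

def isHoriz : Edge → Prop
  | h _ _ => True
  | _ => False

def isVert : Edge → Prop
  | v _ _ => True
  | _ => False

def isDiag : Edge → Prop
  | d _ _ => True
  | _ => False

end Edge

/-- A vertex is white when the arrows around the corresponding face of `Q_k` run
counterclockwise and black when they run clockwise. -/
def isWhite (k : ℤ × ℤ → ℤ) (x : Vtx) : Bool :=
  decide (k (x.1.1 + 1, x.1.2) < k x.1) != x.2

/-- Source of an oriented edge: horizontal and diagonal edges are oriented from left to
right, vertical edges from their black endpoint to their white endpoint. -/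
def Edge.src (k : ℤ × ℤ → ℤ) (e : Edge) : Vtx :=
  match e with
  | Edge.v _ _ =>
      if isWhite k (Edge.ends k e).1 then (Edge.ends k e).2 else (Edge.ends k e).1
  | _ => (Edge.ends k e).1

/-- Target of an oriented edge. -/
def Edge.dst (k : ℤ × ℤ → ℤ) (e : Edge) : Vtx :=
  match e with
  | Edge.v _ _ =>
      if isWhite k (Edge.ends k e).1 then (Edge.ends k e).1 else (Edge.ends k e).2
  | _ => (Edge.ends k e).2

/-- The set `F̊` of closed faces. -/
def innerF (i₀ j₀ k₀ : ℤ) (k : ℤ × ℤ → ℤ) : Set (ℤ × ℤ) :=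
  {f | |f.1 - i₀| + |f.2 - j₀| < k₀ - k f}

/-- The set `∂F` of open faces. -/
def bdryF (i₀ j₀ k₀ : ℤ) (k : ℤ × ℤ → ℤ) : Set (ℤ × ℤ) :=
  if k₀ = k (i₀, j₀) then {(i₀, j₀)}
  else {f | f ∉ innerF i₀ j₀ k₀ k ∧ ∃ g ∈ innerF i₀ j₀ k₀ k, |f.1 - g.1| + |f.2 - g.2| = 1}

/-- The set `F̊ ∪ ∂F` of all faces of the closure. -/
def allF (i₀ j₀ k₀ : ℤ) (k : ℤ × ℤ → ℤ) : Set (ℤ × ℤ) :=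
  innerF i₀ j₀ k₀ k ∪ bdryF i₀ j₀ k₀ k

/-- The edge set of the graph with open faces `G = G_{p,k}`: the finite subgraph of `G_k`
generated by the faces in `F̊`. -/
def EG (i₀ j₀ k₀ : ℤ) (k : ℤ × ℤ → ℤ) : Set Edge :=
  {e | e.valid k ∧ ∃ f ∈ innerF i₀ j₀ k₀ k, e.isSide k f}

/-- The adjusted stepped surface `k_p(i,j) = min (k(i,j), k₀ - |i-i₀| - |j-j₀|)`. -/
def kAdj (i₀ j₀ k₀ : ℤ) (k : ℤ × ℤ → ℤ) : ℤ × ℤ → ℤ :=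
  fun f => min (k f) (k₀ - |f.1 - i₀| - |f.2 - j₀|)

/-- The edge set of the closure `Ḡ` of `G`: the finite subgraph of `G_{k_p}` generated by
the faces in `F̊ ∪ ∂F`. -/
def EGbar (i₀ j₀ k₀ : ℤ) (k : ℤ × ℤ → ℤ) : Set Edge :=
  {e | e.valid (kAdj i₀ j₀ k₀ k) ∧ ∃ f ∈ allF i₀ j₀ k₀ k, e.isSide (kAdj i₀ j₀ k₀ k) f}

/-- The vertex set of the graph with edge set `E`. -/
def VG (k : ℤ × ℤ → ℤ) (E : Set Edge) : Set Vtx := {x | ∃ e ∈ E, Edge.mem k x e}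

/-- A perfect matching of the graph with edge set `E`. -/
def IsPerfectMatching (k : ℤ × ℤ → ℤ) (E M : Set Edge) : Prop :=
  M ⊆ E ∧ ∀ x ∈ VG k E, ∃! e, e ∈ M ∧ Edge.mem k x e

/-- The edge set of the infinite graph `G_∞ = G_{k_p}`. -/
def Einf (i₀ j₀ k₀ : ℤ) (k : ℤ × ℤ → ℤ) : Set Edge := {e | e.valid (kAdj i₀ j₀ k₀ k)}

/-- Acceptable perfect matchings of `G_∞`: perfect matchings `M` of `G_∞` such that
`M \ E(G)` is exactly the set of all diagonal edges of `E(G_∞) \ E(G)`. -/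
def Acceptable (i₀ j₀ k₀ : ℤ) (k : ℤ × ℤ → ℤ) : Set (Set Edge) :=
  {M | IsPerfectMatching (kAdj i₀ j₀ k₀ k) (Einf i₀ j₀ k₀ k) M ∧
       M \ EG i₀ j₀ k₀ k = {e | e ∈ Einf i₀ j₀ k₀ k ∧ e ∉ EG i₀ j₀ k₀ k ∧ e.isDiag}}

/-- The set `Diag(E(Ḡ) \ E(G))` of diagonal edges of the closure not in `G`. -/
def diagExt (i₀ j₀ k₀ : ℤ) (k : ℤ × ℤ → ℤ) : Set Edge :=
  {e | e ∈ EGbar i₀ j₀ k₀ k ∧ e ∉ EG i₀ j₀ k₀ k ∧ e.isDiag}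

/-- `M̄set = { M ∪ Diag(E(Ḡ)\E(G)) : M a perfect matching of G }`. -/
def MbarSet (i₀ j₀ k₀ : ℤ) (k : ℤ × ℤ → ℤ) : Set (Set Edge) :=
  {N | ∃ M, IsPerfectMatching k (EG i₀ j₀ k₀ k) M ∧ N = M ∪ diagExt i₀ j₀ k₀ k}

/-- The set of all white-black horizontal edges (white endpoint on the left) and all
diagonal edges of the graph with edge set `E`; for `E = E(Ḡ)` this is `M̄₀`, for
`E = E(G)` it is `M₀`. -/
def M0 (k : ℤ × ℤ → ℤ) (E : Set Edge) : Set Edge :=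
  {e ∈ E | e.isDiag ∨ (e.isHoriz ∧ isWhite k (Edge.ends k e).1 = true)}

/-- `j ∈ NSet k M i` iff the white-black horizontal edge `N(i,j)` (with face `(i,j)`
directly below it) belongs to `M`. -/
def NSet (k : ℤ × ℤ → ℤ) (M : Set Edge) (i : ℤ) : Set ℤ :=
  {j | Edge.h i j ∈ M ∧ isWhite k (Edge.ends k (Edge.h i j)).1 = true}

/-- `j ∈ SSet k M i` iff the black-white horizontal edge `S(i,j)` (with face `(i,j)`
directly above it) belongs to `M`. -/
def SSet (k : ℤ × ℤ → ℤ) (M : Set Edge) (i : ℤ) : Set ℤ :=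
  {j | Edge.h i (j - 1) ∈ M ∧ isWhite k (Edge.ends k (Edge.h i (j - 1))).1 = false}

/-- A perfect pairing of the horizontal edges of a matching `M`: a set of allowed pairs
`(S(i,j₁), N(i,j₂))`, `j₁ ≤ j₂`, in the same column, using each `S`-edge and each
`N`-edge of `M` exactly once, and noncrossing (this characterises the pairing produced
by the bottom-to-top reading procedure). -/
def IsPerfectPairing (k : ℤ × ℤ → ℤ) (M : Set Edge)
    (P : Set ((ℤ × ℤ) × (ℤ × ℤ))) : Prop :=
  (∀ q ∈ P, q.1.1 = q.2.1 ∧ q.1.2 ≤ q.2.2 ∧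
      q.1.2 ∈ SSet k M q.1.1 ∧ q.2.2 ∈ NSet k M q.2.1) ∧
  (∀ i j : ℤ, j ∈ SSet k M i → ∃! q, q ∈ P ∧ q.1 = (i, j)) ∧
  (∀ i j : ℤ, j ∈ NSet k M i → ∃! q, q ∈ P ∧ q.2 = (i, j)) ∧
  (∀ q ∈ P, ∀ q' ∈ P, q.1.1 = q'.1.1 →
      ¬(q.1.2 < q'.1.2 ∧ q'.1.2 ≤ q.2.2 ∧ q.2.2 < q'.2.2))

/-- The weight `∏_{a=j₁-k(i,j₁)-1}^{j₂+k(i,j₂)+1} c(i,a)` of an allowed pair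
`((i,j₁),(i,j₂))`. -/
def pairWeight (k : ℤ × ℤ → ℤ) (q : (ℤ × ℤ) × (ℤ × ℤ)) : F :=
  ∏ a ∈ Finset.Icc (q.1.2 - k q.1 - 1) (q.2.2 + k q.2 + 1), cv (q.1.1, a)

/-- The pairing-weight: product of the weights of all allowed pairs of a perfect pairing. -/
def wp (k : ℤ × ℤ → ℤ) (P : Set ((ℤ × ℤ) × (ℤ × ℤ))) : F :=
  ∏ᶠ q ∈ P, pairWeight k q

/-- The sides of the face `f` among the edges `E`. -/
def sides (k : ℤ × ℤ → ℤ) (E : Set Edge) (f : ℤ × ℤ) : Set Edge :=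
  {e ∈ E | e.isSide k f}

/-- `⌈(b - a)/2⌉` where `a` (resp. `b`) is the number of sides of the face `f` lying in
(resp. not in) the matching `M`. -/
def faceExp (k : ℤ × ℤ → ℤ) (E M : Set Edge) (f : ℤ × ℤ) : ℤ :=
  ⌈((((sides k E f \ M).ncard : ℚ) - ((sides k E f ∩ M).ncard : ℚ)) / 2 : ℚ)⌉

/-- The face-weight of a matching of the graph with open faces `G`: closed faces
contribute `t(f)^(⌈(b-a)/2⌉ - 1)` and open faces contribute `t(f)^⌈(b-a)/2⌉`. -/
def wfOpen (i₀ j₀ k₀ : ℤ) (k : ℤ × ℤ → ℤ) (E M : Set Edge) : F :=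
  (∏ᶠ f ∈ innerF i₀ j₀ k₀ k, tv f ^ (faceExp k E M f - 1)) *
  (∏ᶠ f ∈ bdryF i₀ j₀ k₀ k, tv f ^ faceExp k E M f)

/-- The face-weight over a set `S` of faces, all of them closed. -/
def wfClosed (k : ℤ × ℤ → ℤ) (E M : Set Edge) (S : Set (ℤ × ℤ)) : F :=
  ∏ᶠ f ∈ S, tv f ^ (faceExp k E M f - 1)

/-- The `c`-exponent function of an edge (an element of the abelian group of `ℤ`-valued
exponent functions on `ℤ × ℤ`):  a white-black horizontal edge `e = h i j` (face
`b = (i,j)` below it) carries `p̄_b = (∏_{α ≥ j + k(i,j) + 2} c(i,α))⁻¹`; a black-white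
horizontal edge `e = h i j` (face `a = (i,j+1)` above it) carries
`p_a = ∏_{α ≥ (j+1) - k(i,j+1) - 1} c(i,α)`; other edges carry no `c`'s.  Colors are read
in the surface `kc`, heights in the surface `kt`. -/
def edgeCExp (kc kt : ℤ × ℤ → ℤ) : Edge → ℤ × ℤ → ℤ
  | Edge.h i j => fun v =>
      if isWhite kc (Edge.ends kc (Edge.h i j)).1 then
        if v.1 = i ∧ j + kt (i, j) + 2 ≤ v.2 then -1 else 0
      else
        if v.1 = i ∧ j - kt (i, j + 1) ≤ v.2 then 1 else 0
  | _ => fun _ => 0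

/-- The `t`-part of the edge-weight: `∏ t(f)⁻¹` over the faces `f ∈ S` incident to `e`. -/
def edgeTPart (k : ℤ × ℤ → ℤ) (S : Set (ℤ × ℤ)) (e : Edge) : F :=
  ∏ᶠ f ∈ {f ∈ S | e.isSide k f}, (tv f)⁻¹

/-- Evaluation of a (finitely supported) exponent function as a Laurent monomial
in the `c(i,j)`. -/
def evalExp (g : ℤ × ℤ → ℤ) : F := ∏ᶠ v : ℤ × ℤ, cv v ^ g v

/-- Left-most vertices lying south-west of the center face `(i₀,j₀)`. -/
def VleftSW (i₀ j₀ : ℤ) (k : ℤ × ℤ → ℤ) (E : Set Edge) : Set Vtx :=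
  {x | x ∈ VG k E ∧ x.1.1 < i₀ ∧ x.1.2 < j₀ ∧
       ¬∃ e ∈ E, (e.isHoriz ∨ e.isDiag) ∧ (Edge.ends k e).2 = x}

/-- Right-most vertices lying south-east of the center face `(i₀,j₀)`. -/
def VrightSE (i₀ j₀ : ℤ) (k : ℤ × ℤ → ℤ) (E : Set Edge) : Set Vtx :=
  {x | x ∈ VG k E ∧ i₀ ≤ x.1.1 ∧ x.1.2 < j₀ ∧
       ¬∃ e ∈ E, (e.isHoriz ∨ e.isDiag) ∧ (Edge.ends k e).1 = x}

/-- Left-most vertices lying north-west of the center face `(i₀,j₀)`. -/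
def VleftNW (i₀ j₀ : ℤ) (k : ℤ × ℤ → ℤ) (E : Set Edge) : Set Vtx :=
  {x | x ∈ VG k E ∧ x.1.1 < i₀ ∧ j₀ ≤ x.1.2 ∧
       ¬∃ e ∈ E, (e.isHoriz ∨ e.isDiag) ∧ (Edge.ends k e).2 = x}

/-- Right-most vertices lying north-east of the center face `(i₀,j₀)`. -/
def VrightNE (i₀ j₀ : ℤ) (k : ℤ × ℤ → ℤ) (E : Set Edge) : Set Vtx :=
  {x | x ∈ VG k E ∧ i₀ ≤ x.1.1 ∧ j₀ ≤ x.1.2 ∧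
       ¬∃ e ∈ E, (e.isHoriz ∨ e.isDiag) ∧ (Edge.ends k e).1 = x}

/-- `P` is the edge set of a family of vertex-disjoint directed paths in the oriented
graph with edge set `E` whose sources are exactly `Src` and whose sinks are exactly
`Snk`. -/
def IsPathFamily (k : ℤ × ℤ → ℤ) (E P : Set Edge) (Src Snk : Set Vtx) : Prop :=
  P ⊆ E ∧
  (∀ x ∈ Src, ({e ∈ P | Edge.src k e = x}).ncard = 1 ∧ {e ∈ P | Edge.dst k e = x} = ∅) ∧
  (∀ x ∈ Snk, ({e ∈ P | Edge.dst k e = x}).ncard = 1 ∧ {e ∈ P | Edge.src k e = x} = ∅) ∧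
  (∀ x : Vtx, x ∉ Src → x ∉ Snk →
      ({e ∈ P | Edge.src k e = x}).ncard = ({e ∈ P | Edge.dst k e = x}).ncard ∧
      ({e ∈ P | Edge.src k e = x}).ncard ≤ 1) ∧
  ∀ x : Vtx, ¬ Relation.TransGen (fun a b => ∃ e ∈ P, Edge.src k e = a ∧ Edge.dst k e = b) x x

/-- **Square faces** (Proposition `prop:main`, part 1): if `(i,j) ∈ F̊` and all four
lattice-neighbours of `(i,j)` have the same height, then the face `(i,j)` of `G` is a
square: its sides are exactly the two horizontal edges `h i j`, `h i (j-1)` and the two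
vertical edges `v i j`, `v (i-1) j`. -/
theorem square_face
    (i₀ j₀ k₀ : ℤ) (k : ℤ × ℤ → ℤ)
    (hstep : SteppedSurface k)
    (hodd : Odd (i₀ + j₀ + k₀))
    (hoddk : ∀ f : ℤ × ℤ, Odd (f.1 + f.2 + k f))
    (hk0 : k (i₀, j₀) ≤ k₀)
    (hfund : ∀ f : ℤ × ℤ, fund f ≤ k f)
    (i j : ℤ) (hin : (i, j) ∈ innerF i₀ j₀ k₀ k)
    (hn1 : k (i - 1, j) = k (i + 1, j)) (hn2 : k (i, j - 1) = k (i + 1, j))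
    (hn3 : k (i, j + 1) = k (i + 1, j)) :
    {e : Edge | e.valid k ∧ e.isSide k (i, j)} =
      {Edge.h i j, Edge.h i (j - 1), Edge.v i j, Edge.v (i - 1) j} := by
  ext e
  simp only [Set.mem_setOf_eq, Set.mem_insert_iff, Set.mem_singleton_iff]
  constructor
  · rintro ⟨hv, hs⟩
    cases e with
    | h a b =>
      simp only [Edge.isSide, Prod.mk.injEq] at hs
      rcases hs with ⟨rfl, rfl⟩ | ⟨h1, h2⟩
      · exact Or.inl rfl
      · right; left; subst h1; congr 1; omega
    | v a b =>
      simp only [Edge.isSide, Prod.mk.injEq] at hs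
      rcases hs with ⟨rfl, rfl⟩ | ⟨h1, h2⟩
      · right; right; left; rfl
      · right; right; right; subst h2; congr 1; omega
    | d a b =>
      exfalso
      simp only [Edge.isSide] at hs
      simp only [Edge.valid] at hv
      by_cases ht : Edge.tAD k (a, b) = true
      case pos =>
        rw [if_pos ht] at hs
        simp only [Edge.tAD, decide_eq_true_eq] at ht
        apply ht
        rcases hs with h1 | h1 <;> rw [Prod.mk.injEq] at h1
        · have e1 : ((a:ℤ)+1, b) = ((i+1:ℤ), j) := by rw [Prod.mk.injEq]; omega
          have e2 : ((a:ℤ), b+1) = ((i:ℤ), j+1) := by rw [Prod.mk.injEq]; omega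
          rw [e1, e2, hn3]
        · have e1 : ((a:ℤ)+1, b) = ((i:ℤ), j-1) := by rw [Prod.mk.injEq]; omega
          have e2 : ((a:ℤ), b+1) = ((i-1:ℤ), j) := by rw [Prod.mk.injEq]; omega
          rw [e1, e2, hn1, hn2]
      case neg =>
        rw [if_neg ht] at hs
        simp only [Edge.tAD, decide_eq_true_eq, not_not] at ht
        rcases hs with h1 | h1 <;> rw [Prod.mk.injEq] at h1 <;>
          rcases hv with hv | hv
        · apply hv
          have e1 : ((a:ℤ), b) = ((i-1:ℤ), j) := by rw [Prod.mk.injEq]; omega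
          have e2 : ((a:ℤ)+1, b+1) = ((i:ℤ), j+1) := by rw [Prod.mk.injEq]; omega
          rw [e1, e2, hn1, hn3]
        · exact hv ht
        · apply hv
          have e1 : ((a:ℤ), b) = ((i:ℤ), j-1) := by rw [Prod.mk.injEq]; omega
          have e2 : ((a:ℤ)+1, b+1) = ((i+1:ℤ), j) := by rw [Prod.mk.injEq]; omega
          rw [e1, e2, hn2]
        · exact hv ht
  · rintro (rfl | rfl | rfl | rfl)
    · exact ⟨trivial, Or.inl rfl⟩
    · refine ⟨trivial, Or.inr ?_⟩; rw [Prod.mk.injEq]; omega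
    · exact ⟨trivial, Or.inl rfl⟩
    · refine ⟨trivial, Or.inr ?_⟩; rw [Prod.mk.injEq]; omega

end OctahedronTSystem
end
end

section
/- Boundary structure of G (Proposition prop_g): Let G = G_{p,k} be the graph with open faces associated with p and an admissible stepped surface k (with k₀ ≥ k(i₀,j₀) and k ≥ fund). Then: (1) every vertex in V_leftSW(G) ∪ V_rightNE(G) is black; (2) every vertex in V_rightSE(G) ∪ V_leftNW(G) is white; (3) |V_leftSW(G)| = |V_rightSE(G)|; (4) |V_leftNW(G)| = |V_rightNE(G)|. -/
noncomputable section
open Classical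

namespace OctahedronTSystem

section BoundaryProof

variable (i₀ j₀ k₀ : ℤ) (k : ℤ × ℤ → ℤ)

lemma memP_iff (i j : ℤ) :
    ((i, j) ∈ innerF i₀ j₀ k₀ k) ↔
      ((i - i₀).natAbs : ℤ) + ((j - j₀).natAbs : ℤ) < k₀ - k (i, j) := by
  have : ((i, j) ∈ innerF i₀ j₀ k₀ k) ↔ |i - i₀| + |j - j₀| < k₀ - k (i, j) := Iff.rfl
  rw [this, Int.abs_eq_natAbs, Int.abs_eq_natAbs]

variable {k}

lemma stepX (hstep : SteppedSurface k) (i j : ℤ) :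
    k (i + 1, j) = k (i, j) + 1 ∨ k (i + 1, j) = k (i, j) - 1 := by
  have h := hstep (i + 1, j) (i, j) (by simp)
  rw [Int.abs_eq_natAbs] at h
  omega

lemma stepY (hstep : SteppedSurface k) (i j : ℤ) :
    k (i, j + 1) = k (i, j) + 1 ∨ k (i, j + 1) = k (i, j) - 1 := by
  have h := hstep (i, j + 1) (i, j) (by simp)
  rw [Int.abs_eq_natAbs] at h
  omega

lemma stepTowardU (hstep : SteppedSurface k) {i j : ℤ} (hj : j < j₀)
    (h : (i, j) ∈ innerF i₀ j₀ k₀ k) : (i, j + 1) ∈ innerF i₀ j₀ k₀ k := by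
  rw [memP_iff] at *
  have := stepY hstep i j
  omega

lemma stepTowardD (hstep : SteppedSurface k) {i j : ℤ} (hj : j₀ < j)
    (h : (i, j) ∈ innerF i₀ j₀ k₀ k) : (i, j - 1) ∈ innerF i₀ j₀ k₀ k := by
  rw [memP_iff] at *
  have h2 := stepY hstep i (j - 1)
  rw [show j - 1 + 1 = j by omega] at h2
  omega

lemma stepTowardR (hstep : SteppedSurface k) {i j : ℤ} (hi : i < i₀)
    (h : (i, j) ∈ innerF i₀ j₀ k₀ k) : (i + 1, j) ∈ innerF i₀ j₀ k₀ k := by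
  rw [memP_iff] at *
  have := stepX hstep i j
  omega

lemma stepTowardL (hstep : SteppedSurface k) {i j : ℤ} (hi : i₀ < i)
    (h : (i, j) ∈ innerF i₀ j₀ k₀ k) : (i - 1, j) ∈ innerF i₀ j₀ k₀ k := by
  rw [memP_iff] at *
  have h2 := stepX hstep (i - 1) j
  rw [show i - 1 + 1 = i by omega] at h2
  omega

/-- rows of the region are intervals, left half. -/
lemma rowIntL (hstep : SteppedSurface k) {j a i : ℤ}
    (ha : (a, j) ∈ innerF i₀ j₀ k₀ k) (h1 : a ≤ i) (h2 : i ≤ i₀) :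
    (i, j) ∈ innerF i₀ j₀ k₀ k := by
  have key : ∀ n : ℕ, a + (n : ℤ) ≤ i₀ → (a + (n : ℤ), j) ∈ innerF i₀ j₀ k₀ k := by
    intro n
    induction n with
    | zero => intro _; simpa using ha
    | succ m ih =>
        intro h
        have hm := ih (by push_cast at h ⊢; omega)
        have h2 := stepTowardR i₀ j₀ k₀ hstep (i := a + (m : ℤ)) (j := j)
          (by push_cast at h ⊢; omega) hm
        rw [show a + ((m + 1 : ℕ) : ℤ) = a + (m : ℤ) + 1 by push_cast; ring]
        exact h2
  have h3 := key (i - a).toNat (by omega)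
  rw [show a + (((i - a).toNat : ℕ) : ℤ) = i by omega] at h3
  exact h3

/-- rows of the region are intervals, right half. -/
lemma rowIntR (hstep : SteppedSurface k) {j b i : ℤ}
    (hb : (b, j) ∈ innerF i₀ j₀ k₀ k) (h1 : i₀ ≤ i) (h2 : i ≤ b) :
    (i, j) ∈ innerF i₀ j₀ k₀ k := by
  have key : ∀ n : ℕ, i₀ ≤ b - (n : ℤ) → (b - (n : ℤ), j) ∈ innerF i₀ j₀ k₀ k := by
    intro n
    induction n with
    | zero => intro _; simpa using hb
    | succ m ih =>
        intro h
        have hm := ih (by push_cast at h ⊢; omega)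
        have h2 := stepTowardL i₀ j₀ k₀ hstep (i := b - (m : ℤ)) (j := j)
          (by push_cast at h ⊢; omega) hm
        rw [show b - ((m + 1 : ℕ) : ℤ) = b - (m : ℤ) - 1 by push_cast; ring]
        exact h2
  have h3 := key (b - i).toNat (by omega)
  rw [show b - (((b - i).toNat : ℕ) : ℤ) = i by omega] at h3
  exact h3

lemma bddBelowRow (hfund : ∀ f : ℤ × ℤ, fund f ≤ k f) (j : ℤ) :
    ∀ i : ℤ, (i, j) ∈ innerF i₀ j₀ k₀ k → i₀ - k₀ - 1 ≤ i := by
  intro i hi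
  rw [memP_iff] at hi
  have h := hfund (i, j)
  simp only [fund] at h
  omega

lemma bddAboveRow (hfund : ∀ f : ℤ × ℤ, fund f ≤ k f) (j : ℤ) :
    ∀ i : ℤ, (i, j) ∈ innerF i₀ j₀ k₀ k → i ≤ i₀ + k₀ + 1 := by
  intro i hi
  rw [memP_iff] at hi
  have h := hfund (i, j)
  simp only [fund] at h
  omega

variable (k) in
/-- the least column index of a row of the region. -/
noncomputable def aRow (j : ℤ) : ℤ :=
  if h : ∃ a : ℤ, (a, j) ∈ innerF i₀ j₀ k₀ k ∧
      ∀ i : ℤ, (i, j) ∈ innerF i₀ j₀ k₀ k → a ≤ i then h.choose else 0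

variable (k) in
/-- the greatest column index of a row of the region. -/
noncomputable def gRow (j : ℤ) : ℤ :=
  if h : ∃ g : ℤ, (g, j) ∈ innerF i₀ j₀ k₀ k ∧
      ∀ i : ℤ, (i, j) ∈ innerF i₀ j₀ k₀ k → i ≤ g then h.choose else 0

lemma aRow_spec (hfund : ∀ f : ℤ × ℤ, fund f ≤ k f) (j : ℤ)
    (hne : ∃ i : ℤ, (i, j) ∈ innerF i₀ j₀ k₀ k) :
    (aRow i₀ j₀ k₀ k j, j) ∈ innerF i₀ j₀ k₀ k ∧
      ∀ i : ℤ, (i, j) ∈ innerF i₀ j₀ k₀ k → aRow i₀ j₀ k₀ k j ≤ i := by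
  have hex : ∃ a : ℤ, (a, j) ∈ innerF i₀ j₀ k₀ k ∧
      ∀ i : ℤ, (i, j) ∈ innerF i₀ j₀ k₀ k → a ≤ i := by
    exact Int.exists_least_of_bdd (P := fun i => (i, j) ∈ innerF i₀ j₀ k₀ k)
      ⟨i₀ - k₀ - 1, bddBelowRow i₀ j₀ k₀ hfund j⟩ hne
  rw [aRow, dif_pos hex]
  exact hex.choose_spec

lemma gRow_spec (hfund : ∀ f : ℤ × ℤ, fund f ≤ k f) (j : ℤ)
    (hne : ∃ i : ℤ, (i, j) ∈ innerF i₀ j₀ k₀ k) :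
    (gRow i₀ j₀ k₀ k j, j) ∈ innerF i₀ j₀ k₀ k ∧
      ∀ i : ℤ, (i, j) ∈ innerF i₀ j₀ k₀ k → i ≤ gRow i₀ j₀ k₀ k j := by
  have hex : ∃ g : ℤ, (g, j) ∈ innerF i₀ j₀ k₀ k ∧
      ∀ i : ℤ, (i, j) ∈ innerF i₀ j₀ k₀ k → i ≤ g := by
    exact Int.exists_greatest_of_bdd (P := fun i => (i, j) ∈ innerF i₀ j₀ k₀ k)
      ⟨i₀ + k₀ + 1, bddAboveRow i₀ j₀ k₀ hfund j⟩ hne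
  rw [gRow, dif_pos hex]
  exact hex.choose_spec

lemma tAD_eq (i j : ℤ) :
    Edge.tAD k (i, j) = decide (k (i + 1, j) ≠ k (i, j + 1)) := rfl

lemma tBC_eq (i j : ℤ) :
    Edge.tBC k (i, j) = decide (k (i, j) ≠ k (i + 1, j + 1)) := rfl

lemma split_excl (hstep : SteppedSurface k) (i j : ℤ) :
    ¬(Edge.tAD k (i, j) = true ∧ Edge.tBC k (i, j) = true) := by
  have hB := stepX hstep i j
  have hD := stepY hstep i j
  have hBC := stepY hstep (i + 1) j
  have hDC := stepX hstep i (j + 1)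
  rintro ⟨h1, h2⟩
  rw [tAD_eq, decide_eq_true_eq] at h1
  rw [tBC_eq, decide_eq_true_eq] at h2
  omega

lemma tBC_false (hstep : SteppedSurface k) {i j : ℤ}
    (h : Edge.tAD k (i, j) = true) : Edge.tBC k (i, j) = false := by
  rcases Bool.eq_false_or_eq_true (Edge.tBC k (i, j)) with h2 | h2
  · exact absurd ⟨h, h2⟩ (split_excl hstep i j)
  · exact h2

lemma tAD_false (hstep : SteppedSurface k) {i j : ℤ}
    (h : Edge.tBC k (i, j) = true) : Edge.tAD k (i, j) = false := by
  rcases Bool.eq_false_or_eq_true (Edge.tAD k (i, j)) with h2 | h2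
  · exact absurd ⟨h2, h⟩ (split_excl hstep i j)
  · exact h2

variable (k)

lemma hmem_iff (i j : ℤ) : Edge.h i j ∈ EG i₀ j₀ k₀ k ↔
    ((i, j) ∈ innerF i₀ j₀ k₀ k ∨ (i, j + 1) ∈ innerF i₀ j₀ k₀ k) := by
  constructor
  · rintro ⟨-, f, hf, hs⟩
    rcases (hs : f = (i, j) ∨ f = (i, j + 1)) with rfl | rfl
    · exact Or.inl hf
    · exact Or.inr hf
  · rintro (h | h)
    · exact ⟨trivial, (i, j), h, Or.inl rfl⟩
    · exact ⟨trivial, (i, j + 1), h, Or.inr rfl⟩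

lemma vmem_iff (i j : ℤ) : Edge.v i j ∈ EG i₀ j₀ k₀ k ↔
    ((i, j) ∈ innerF i₀ j₀ k₀ k ∨ (i + 1, j) ∈ innerF i₀ j₀ k₀ k) := by
  constructor
  · rintro ⟨-, f, hf, hs⟩
    rcases (hs : f = (i, j) ∨ f = (i + 1, j)) with rfl | rfl
    · exact Or.inl hf
    · exact Or.inr hf
  · rintro (h | h)
    · exact ⟨trivial, (i, j), h, Or.inl rfl⟩
    · exact ⟨trivial, (i + 1, j), h, Or.inr rfl⟩

lemma dmem_iff (i j : ℤ) : Edge.d i j ∈ EG i₀ j₀ k₀ k ↔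
    (k (i, j) ≠ k (i + 1, j + 1) ∨ k (i + 1, j) ≠ k (i, j + 1)) ∧
    ((Edge.tAD k (i, j) = true ∧
        ((i, j) ∈ innerF i₀ j₀ k₀ k ∨ (i + 1, j + 1) ∈ innerF i₀ j₀ k₀ k)) ∨
     (Edge.tAD k (i, j) = false ∧
        ((i + 1, j) ∈ innerF i₀ j₀ k₀ k ∨ (i, j + 1) ∈ innerF i₀ j₀ k₀ k))) := by
  have hred : ∀ f : ℤ × ℤ, Edge.isSide k f (Edge.d i j) =
      ite (Edge.tAD k (i, j) = true) (f = (i, j) ∨ f = (i + 1, j + 1))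
        (f = (i + 1, j) ∨ f = (i, j + 1)) := fun f => rfl
  rcases Bool.eq_false_or_eq_true (Edge.tAD k (i, j)) with htA | htA
  · constructor
    · rintro ⟨hv, f, hf, hs⟩
      rw [hred, if_pos htA] at hs
      refine ⟨hv, Or.inl ⟨htA, ?_⟩⟩
      rcases hs with rfl | rfl
      · exact Or.inl hf
      · exact Or.inr hf
    · rintro ⟨hv, (⟨-, (h | h)⟩ | ⟨h1, -⟩)⟩
      · exact ⟨hv, (i, j), h, by rw [hred, if_pos htA]; exact Or.inl rfl⟩
      · exact ⟨hv, (i + 1, j + 1), h, by rw [hred, if_pos htA]; exact Or.inr rfl⟩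
      · rw [htA] at h1; exact absurd h1 (by simp)
  · constructor
    · rintro ⟨hv, f, hf, hs⟩
      rw [hred, if_neg (by simp [htA])] at hs
      refine ⟨hv, Or.inr ⟨htA, ?_⟩⟩
      rcases hs with rfl | rfl
      · exact Or.inl hf
      · exact Or.inr hf
    · rintro ⟨hv, (⟨h1, -⟩ | ⟨-, (h | h)⟩)⟩
      · rw [htA] at h1; exact absurd h1 (by simp)
      · exact ⟨hv, (i + 1, j), h, by rw [hred, if_neg (by simp [htA])]; exact Or.inl rfl⟩
      · exact ⟨hv, (i, j + 1), h, by rw [hred, if_neg (by simp [htA])]; exact Or.inr rfl⟩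

variable {k}

lemma memVG_elim (hstep : SteppedSurface k) {i j : ℤ} {b : Bool}
    (hx : (((i, j), b) : Vtx) ∈ VG k (EG i₀ j₀ k₀ k)) :
    (b = Edge.tAD k (i, j) ∧
        ((i, j) ∈ innerF i₀ j₀ k₀ k ∨ (i, j + 1) ∈ innerF i₀ j₀ k₀ k)) ∨
    (b = Edge.tBC k (i, j) ∧
        ((i + 1, j) ∈ innerF i₀ j₀ k₀ k ∨ (i + 1, j + 1) ∈ innerF i₀ j₀ k₀ k)) ∨
    (b = false ∧
        ((i, j) ∈ innerF i₀ j₀ k₀ k ∨ (i + 1, j) ∈ innerF i₀ j₀ k₀ k)) ∨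
    (b = (Edge.tAD k (i, j) || Edge.tBC k (i, j)) ∧
        ((i, j + 1) ∈ innerF i₀ j₀ k₀ k ∨ (i + 1, j + 1) ∈ innerF i₀ j₀ k₀ k)) := by
  obtain ⟨e, he, hm⟩ := hx
  cases e with
  | h u w =>
      rw [hmem_iff] at he
      replace hm : (((i, j), b) : Vtx) = ((u - 1, w), Edge.tBC k (u - 1, w)) ∨
          (((i, j), b) : Vtx) = ((u, w), Edge.tAD k (u, w)) := hm
      rcases hm with hm | hm
      · rw [Prod.mk.injEq, Prod.mk.injEq] at hm
        obtain ⟨⟨hi', hj'⟩, hb'⟩ := hm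
        subst hi'; subst hj'
        rw [show u - 1 + 1 = u from by ring]
        exact Or.inr (Or.inl ⟨hb', he⟩)
      · rw [Prod.mk.injEq, Prod.mk.injEq] at hm
        obtain ⟨⟨hi', hj'⟩, hb'⟩ := hm
        subst hi'; subst hj'
        exact Or.inl ⟨hb', he⟩
  | v u w =>
      rw [vmem_iff] at he
      replace hm : (((i, j), b) : Vtx) =
          ((u, w - 1), Edge.tAD k (u, w - 1) || Edge.tBC k (u, w - 1)) ∨
          (((i, j), b) : Vtx) = ((u, w), false) := hm
      rcases hm with hm | hm
      · rw [Prod.mk.injEq, Prod.mk.injEq] at hm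
        obtain ⟨⟨hi', hj'⟩, hb'⟩ := hm
        subst hi'; subst hj'
        rw [show w - 1 + 1 = w from by ring]
        exact Or.inr (Or.inr (Or.inr ⟨hb', he⟩))
      · rw [Prod.mk.injEq, Prod.mk.injEq] at hm
        obtain ⟨⟨hi', hj'⟩, hb'⟩ := hm
        subst hi'; subst hj'
        exact Or.inr (Or.inr (Or.inl ⟨hb', he⟩))
  | d u w =>
      rw [dmem_iff] at he
      obtain ⟨hv, hside⟩ := he
      replace hm : (((i, j), b) : Vtx) = ((u, w), Edge.tAD k (u, w)) ∨
          (((i, j), b) : Vtx) = ((u, w), Edge.tBC k (u, w)) := hm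
      rcases hm with hm | hm
      · rw [Prod.mk.injEq, Prod.mk.injEq] at hm
        obtain ⟨⟨hi', hj'⟩, hb'⟩ := hm
        subst hi'; subst hj'
        rcases hside with ⟨htA, hf⟩ | ⟨htA, hf⟩
        · have htB := tBC_false hstep htA
          rcases hf with hf | hf
          · exact Or.inl ⟨by rw [hb', htA], Or.inl hf⟩
          · exact Or.inr (Or.inr (Or.inr ⟨by rw [hb', htA, htB]; rfl, Or.inr hf⟩))
        · rcases hf with hf | hf
          · exact Or.inr (Or.inr (Or.inl ⟨by rw [hb', htA], Or.inr hf⟩))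
          · exact Or.inl ⟨hb', Or.inr hf⟩
      · rw [Prod.mk.injEq, Prod.mk.injEq] at hm
        obtain ⟨⟨hi', hj'⟩, hb'⟩ := hm
        subst hi'; subst hj'
        rcases hside with ⟨htA, hf⟩ | ⟨htA, hf⟩
        · have htB := tBC_false hstep htA
          rcases hf with hf | hf
          · exact Or.inr (Or.inr (Or.inl ⟨by rw [hb', htB], Or.inl hf⟩))
          · exact Or.inr (Or.inl ⟨hb', Or.inr hf⟩)
        · rcases hf with hf | hf
          · exact Or.inr (Or.inl ⟨hb', Or.inl hf⟩)
          · exact Or.inr (Or.inr (Or.inr ⟨by rw [hb', htA]; simp, Or.inl hf⟩))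

variable (k) in
/-- canonical boolean for the left-most SW vertex in its square. -/
noncomputable def bSW (s : ℤ × ℤ) : Bool :=
  Edge.tAD k s || (Edge.tBC k s && !(decide ((s.1 + 1, s.2) ∈ innerF i₀ j₀ k₀ k)))

variable (k) in
/-- canonical boolean for the right-most SE vertex in its square. -/
noncomputable def bSE (s : ℤ × ℤ) : Bool :=
  (Edge.tAD k s && !(decide (s ∈ innerF i₀ j₀ k₀ k))) || Edge.tBC k s

variable (k) in
/-- canonical boolean for the left-most NW vertex in its square. -/
noncomputable def bNW (s : ℤ × ℤ) : Bool :=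
  Edge.tAD k s && decide ((s.1 + 1, s.2 + 1) ∈ innerF i₀ j₀ k₀ k)

variable (k) in
/-- canonical boolean for the right-most NE vertex in its square. -/
noncomputable def bNE (s : ℤ × ℤ) : Bool :=
  Edge.tBC k s && decide ((s.1, s.2 + 1) ∈ innerF i₀ j₀ k₀ k)

lemma stepX' (hstep : SteppedSurface k) (i j : ℤ) :
    (k (i + 1, j) - k (i, j)).natAbs = 1 := by
  have := stepX hstep i j; omega

lemma stepY' (hstep : SteppedSurface k) (i j : ℤ) :
    (k (i, j + 1) - k (i, j)).natAbs = 1 := by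
  have := stepY hstep i j; omega

lemma fwd_SW (hstep : SteppedSurface k) {i j : ℤ} {b : Bool}
    (hx : (((i, j), b) : Vtx) ∈ VleftSW i₀ j₀ k (EG i₀ j₀ k₀ k)) :
    i < i₀ ∧ j < j₀ ∧ (i + 1, j + 1) ∈ innerF i₀ j₀ k₀ k ∧
      ¬((i, j + 1) ∈ innerF i₀ j₀ k₀ k) ∧ b = bSW i₀ j₀ k₀ k (i, j) ∧
      isWhite k ((i, j), b) = false := by
  obtain ⟨hVG, hi, hj, hNI⟩ := hx
  replace hi : i < i₀ := hi
  replace hj : j < j₀ := hj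
  have NIh : ¬(((i, j) ∈ innerF i₀ j₀ k₀ k ∨ (i, j + 1) ∈ innerF i₀ j₀ k₀ k) ∧
      b = Edge.tAD k (i, j)) := by
    rintro ⟨h1, h2⟩
    exact hNI ⟨Edge.h i j, (hmem_iff i₀ j₀ k₀ k i j).2 h1, Or.inl trivial, by rw [h2]; rfl⟩
  have NId : ¬(Edge.d i j ∈ EG i₀ j₀ k₀ k ∧ b = Edge.tBC k (i, j)) := by
    rintro ⟨h1, h2⟩
    exact hNI ⟨Edge.d i j, h1, Or.inr trivial, by rw [h2]; rfl⟩
  rw [dmem_iff] at NId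
  have hcl := memVG_elim i₀ j₀ k₀ hstep hVG
  have hB := stepX' hstep i j
  have hD := stepY' hstep i j
  have hBC := stepY' hstep (i + 1) j
  have hDC := stepX' hstep i (j + 1)
  rcases Bool.eq_false_or_eq_true (Edge.tAD k (i, j)) with htA | htA <;>
    rcases Bool.eq_false_or_eq_true (Edge.tBC k (i, j)) with htB | htB
  · exact absurd ⟨htA, htB⟩ (split_excl hstep i j)
  · -- AC split : tAD = true, tBC = false
    have hADq : k (i + 1, j) ≠ k (i, j + 1) := by
      have h := htA; rwa [tAD_eq, decide_eq_true_eq] at h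
    have hACq : k (i, j) = k (i + 1, j + 1) := by
      have h := htB; rw [tBC_eq, decide_eq_false_iff_not, ne_eq, not_not] at h; exact h
    cases b with
    | true =>
        have hna : ¬((i, j) ∈ innerF i₀ j₀ k₀ k ∨ (i, j + 1) ∈ innerF i₀ j₀ k₀ k) :=
          fun h => NIh ⟨h, by rw [htA]⟩
        have hmem : (i, j + 1) ∈ innerF i₀ j₀ k₀ k ∨ (i + 1, j + 1) ∈ innerF i₀ j₀ k₀ k := by
          rcases hcl with ⟨-, h⟩ | ⟨hbv, -⟩ | ⟨hbv, -⟩ | ⟨-, h⟩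
          · exact absurd h hna
          · rw [htB] at hbv; exact absurd hbv (by simp)
          · exact absurd hbv (by simp)
          · exact h
        have key : (i + 1, j + 1) ∈ innerF i₀ j₀ k₀ k ∧ ¬((i, j + 1) ∈ innerF i₀ j₀ k₀ k)
            ∧ k (i + 1, j) < k (i, j) := by
          simp only [memP_iff] at hmem hna ⊢
          omega
        refine ⟨hi, hj, key.1, key.2.1, ?_, ?_⟩
        · simp [bSW, htA]
        · simp [isWhite, key.2.2]
    | false =>
        exfalso
        have hnd : ¬((i, j) ∈ innerF i₀ j₀ k₀ k ∨ (i + 1, j + 1) ∈ innerF i₀ j₀ k₀ k) := by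
          intro h
          exact NId ⟨⟨Or.inr hADq, Or.inl ⟨htA, h⟩⟩, by rw [htB]⟩
        have hmem : ((i + 1, j) ∈ innerF i₀ j₀ k₀ k ∨ (i + 1, j + 1) ∈ innerF i₀ j₀ k₀ k) ∨
            ((i, j) ∈ innerF i₀ j₀ k₀ k ∨ (i + 1, j) ∈ innerF i₀ j₀ k₀ k) := by
          rcases hcl with ⟨hbv, -⟩ | ⟨-, h⟩ | ⟨-, h⟩ | ⟨hbv, -⟩
          · rw [htA] at hbv; exact absurd hbv (by simp)
          · exact Or.inl h
          · exact Or.inr h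
          · rw [htA, htB] at hbv; exact absurd hbv (by simp)
        simp only [memP_iff] at hmem hnd
        omega
  · -- BD split : tAD = false, tBC = true
    have hADq : k (i + 1, j) = k (i, j + 1) := by
      have h := htA; rw [tAD_eq, decide_eq_false_iff_not, ne_eq, not_not] at h; exact h
    have hACq : k (i, j) ≠ k (i + 1, j + 1) := by
      have h := htB; rwa [tBC_eq, decide_eq_true_eq] at h
    cases b with
    | false =>
        have hna : ¬((i, j) ∈ innerF i₀ j₀ k₀ k ∨ (i, j + 1) ∈ innerF i₀ j₀ k₀ k) :=
          fun h => NIh ⟨h, by rw [htA]⟩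
        have hmem : (i, j) ∈ innerF i₀ j₀ k₀ k ∨ (i + 1, j) ∈ innerF i₀ j₀ k₀ k := by
          rcases hcl with ⟨-, h⟩ | ⟨hbv, -⟩ | ⟨-, h⟩ | ⟨hbv, -⟩
          · exact absurd h hna
          · rw [htB] at hbv; exact absurd hbv (by simp)
          · exact h
          · rw [htA, htB] at hbv; exact absurd hbv (by simp)
        have hβ : (i + 1, j) ∈ innerF i₀ j₀ k₀ k := by
          rcases hmem with h | h
          · exact absurd (Or.inl h) hna
          · exact h
        have key : (i + 1, j + 1) ∈ innerF i₀ j₀ k₀ k ∧ ¬((i, j + 1) ∈ innerF i₀ j₀ k₀ k)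
            ∧ ¬(k (i + 1, j) < k (i, j)) := by
          have hβ' := hβ
          have hna' := hna
          simp only [memP_iff] at hβ' hna' ⊢
          omega
        refine ⟨hi, hj, key.1, key.2.1, ?_, ?_⟩
        · simp [bSW, htA, htB, hβ]
        · simp [isWhite, key.2.2]
    | true =>
        have hnd : ¬((i + 1, j) ∈ innerF i₀ j₀ k₀ k ∨ (i, j + 1) ∈ innerF i₀ j₀ k₀ k) := by
          intro h
          exact NId ⟨⟨Or.inl hACq, Or.inr ⟨htA, h⟩⟩, by rw [htB]⟩
        have hmem : (i + 1, j) ∈ innerF i₀ j₀ k₀ k ∨ (i + 1, j + 1) ∈ innerF i₀ j₀ k₀ k ∨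
            (i, j + 1) ∈ innerF i₀ j₀ k₀ k := by
          rcases hcl with ⟨hbv, -⟩ | ⟨-, h⟩ | ⟨hbv, -⟩ | ⟨-, h⟩
          · rw [htA] at hbv; exact absurd hbv (by simp)
          · rcases h with h | h
            · exact Or.inl h
            · exact Or.inr (Or.inl h)
          · exact absurd hbv (by simp)
          · rcases h with h | h
            · exact Or.inr (Or.inr h)
            · exact Or.inr (Or.inl h)
        have key : (i + 1, j + 1) ∈ innerF i₀ j₀ k₀ k ∧ ¬((i, j + 1) ∈ innerF i₀ j₀ k₀ k)
            ∧ k (i + 1, j) < k (i, j) := by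
          simp only [memP_iff] at hmem hnd ⊢
          omega
        refine ⟨hi, hj, key.1, key.2.1, ?_, ?_⟩
        · have hnβ : ¬((i + 1, j) ∈ innerF i₀ j₀ k₀ k) := fun h => hnd (Or.inl h)
          simp [bSW, htA, htB, hnβ]
        · simp [isWhite, key.2.2]
  · -- unsplit square
    have hADq : k (i + 1, j) = k (i, j + 1) := by
      have h := htA; rw [tAD_eq, decide_eq_false_iff_not, ne_eq, not_not] at h; exact h
    have hACq : k (i, j) = k (i + 1, j + 1) := by
      have h := htB; rw [tBC_eq, decide_eq_false_iff_not, ne_eq, not_not] at h; exact h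
    cases b with
    | true =>
        exfalso
        rcases hcl with ⟨hbv, -⟩ | ⟨hbv, -⟩ | ⟨hbv, -⟩ | ⟨hbv, -⟩
        · rw [htA] at hbv; exact absurd hbv (by simp)
        · rw [htB] at hbv; exact absurd hbv (by simp)
        · exact absurd hbv (by simp)
        · rw [htA, htB] at hbv; exact absurd hbv (by simp)
    | false =>
        have hna : ¬((i, j) ∈ innerF i₀ j₀ k₀ k ∨ (i, j + 1) ∈ innerF i₀ j₀ k₀ k) :=
          fun h => NIh ⟨h, by rw [htA]⟩
        have hmem : ((i + 1, j) ∈ innerF i₀ j₀ k₀ k ∨ (i + 1, j + 1) ∈ innerF i₀ j₀ k₀ k) ∨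
            ((i, j) ∈ innerF i₀ j₀ k₀ k ∨ (i + 1, j) ∈ innerF i₀ j₀ k₀ k) ∨
            ((i, j + 1) ∈ innerF i₀ j₀ k₀ k ∨ (i + 1, j + 1) ∈ innerF i₀ j₀ k₀ k) := by
          rcases hcl with ⟨-, h⟩ | ⟨-, h⟩ | ⟨-, h⟩ | ⟨-, h⟩
          · exact absurd h hna
          · exact Or.inl h
          · exact Or.inr (Or.inl h)
          · exact Or.inr (Or.inr h)
        have key : (i + 1, j + 1) ∈ innerF i₀ j₀ k₀ k ∧ ¬((i, j + 1) ∈ innerF i₀ j₀ k₀ k)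
            ∧ ¬(k (i + 1, j) < k (i, j)) := by
          simp only [memP_iff] at hmem hna ⊢
          omega
        refine ⟨hi, hj, key.1, key.2.1, ?_, ?_⟩
        · simp [bSW, htA, htB]
        · simp [isWhite, key.2.2]

lemma fwd_SE (hstep : SteppedSurface k) {i j : ℤ} {b : Bool}
    (hx : (((i, j), b) : Vtx) ∈ VrightSE i₀ j₀ k (EG i₀ j₀ k₀ k)) :
    i₀ ≤ i ∧ j < j₀ ∧ (i, j + 1) ∈ innerF i₀ j₀ k₀ k ∧
      ¬((i + 1, j + 1) ∈ innerF i₀ j₀ k₀ k) ∧ b = bSE i₀ j₀ k₀ k (i, j) ∧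
      isWhite k ((i, j), b) = true := by
  obtain ⟨hVG, hi, hj, hNO⟩ := hx
  replace hi : i₀ ≤ i := hi
  replace hj : j < j₀ := hj
  have NOh : ¬(((i + 1, j) ∈ innerF i₀ j₀ k₀ k ∨ (i + 1, j + 1) ∈ innerF i₀ j₀ k₀ k) ∧
      b = Edge.tBC k (i, j)) := by
    rintro ⟨h1, h2⟩
    refine hNO ⟨Edge.h (i + 1) j, (hmem_iff i₀ j₀ k₀ k (i + 1) j).2 h1, Or.inl trivial, ?_⟩
    show (((i + 1 - 1, j), Edge.tBC k (i + 1 - 1, j)) : Vtx) = ((i, j), b)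
    rw [show i + 1 - 1 = i from by ring, h2]
  have NOd : ¬(Edge.d i j ∈ EG i₀ j₀ k₀ k ∧ b = Edge.tAD k (i, j)) := by
    rintro ⟨h1, h2⟩
    exact hNO ⟨Edge.d i j, h1, Or.inr trivial, by rw [h2]; rfl⟩
  rw [dmem_iff] at NOd
  have hcl := memVG_elim i₀ j₀ k₀ hstep hVG
  have hB := stepX' hstep i j
  have hD := stepY' hstep i j
  have hBC := stepY' hstep (i + 1) j
  have hDC := stepX' hstep i (j + 1)
  rcases Bool.eq_false_or_eq_true (Edge.tAD k (i, j)) with htA | htA <;>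
    rcases Bool.eq_false_or_eq_true (Edge.tBC k (i, j)) with htB | htB
  · exact absurd ⟨htA, htB⟩ (split_excl hstep i j)
  · -- AC split
    have hADq : k (i + 1, j) ≠ k (i, j + 1) := by
      have h := htA; rwa [tAD_eq, decide_eq_true_eq] at h
    have hACq : k (i, j) = k (i + 1, j + 1) := by
      have h := htB; rw [tBC_eq, decide_eq_false_iff_not, ne_eq, not_not] at h; exact h
    cases b with
    | true =>
        have hnd : ¬((i, j) ∈ innerF i₀ j₀ k₀ k ∨ (i + 1, j + 1) ∈ innerF i₀ j₀ k₀ k) :=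
          fun h => NOd ⟨⟨Or.inr hADq, Or.inl ⟨htA, h⟩⟩, htA.symm⟩
        have hmem : ((i, j) ∈ innerF i₀ j₀ k₀ k ∨ (i, j + 1) ∈ innerF i₀ j₀ k₀ k) ∨
            ((i, j + 1) ∈ innerF i₀ j₀ k₀ k ∨ (i + 1, j + 1) ∈ innerF i₀ j₀ k₀ k) := by
          rcases hcl with ⟨-, h⟩ | ⟨hbv, -⟩ | ⟨hbv, -⟩ | ⟨-, h⟩
          · exact Or.inl h
          · rw [htB] at hbv; exact absurd hbv (by simp)
          · exact absurd hbv (by simp)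
          · exact Or.inr h
        have key : (i, j + 1) ∈ innerF i₀ j₀ k₀ k ∧ ¬((i + 1, j + 1) ∈ innerF i₀ j₀ k₀ k)
            ∧ ¬(k (i + 1, j) < k (i, j)) := by
          simp only [memP_iff] at hmem hnd ⊢
          omega
        refine ⟨hi, hj, key.1, key.2.1, ?_, ?_⟩
        · have hnα : ¬((i, j) ∈ innerF i₀ j₀ k₀ k) := fun h => hnd (Or.inl h)
          simp [bSE, htA, htB, hnα]
        · simp [isWhite, key.2.2]
    | false =>
        have hna : ¬((i + 1, j) ∈ innerF i₀ j₀ k₀ k ∨ (i + 1, j + 1) ∈ innerF i₀ j₀ k₀ k) :=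
          fun h => NOh ⟨h, htB.symm⟩
        have hmem : (i, j) ∈ innerF i₀ j₀ k₀ k ∨ (i + 1, j) ∈ innerF i₀ j₀ k₀ k := by
          rcases hcl with ⟨hbv, -⟩ | ⟨-, h⟩ | ⟨-, h⟩ | ⟨hbv, -⟩
          · rw [htA] at hbv; exact absurd hbv (by simp)
          · exact absurd h hna
          · exact h
          · rw [htA, htB] at hbv; exact absurd hbv (by simp)
        have hα : (i, j) ∈ innerF i₀ j₀ k₀ k := by
          rcases hmem with h | h
          · exact h
          · exact absurd (Or.inl h) hna
        have key : (i, j + 1) ∈ innerF i₀ j₀ k₀ k ∧ ¬((i + 1, j + 1) ∈ innerF i₀ j₀ k₀ k)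
            ∧ k (i + 1, j) < k (i, j) := by
          have hα' := hα
          have hna' := hna
          simp only [memP_iff] at hα' hna' ⊢
          omega
        refine ⟨hi, hj, key.1, key.2.1, ?_, ?_⟩
        · simp [bSE, htA, htB, hα]
        · simp [isWhite, key.2.2]
  · -- BD split
    have hADq : k (i + 1, j) = k (i, j + 1) := by
      have h := htA; rw [tAD_eq, decide_eq_false_iff_not, ne_eq, not_not] at h; exact h
    have hACq : k (i, j) ≠ k (i + 1, j + 1) := by
      have h := htB; rwa [tBC_eq, decide_eq_true_eq] at h
    cases b with
    | true =>
        have hna : ¬((i + 1, j) ∈ innerF i₀ j₀ k₀ k ∨ (i + 1, j + 1) ∈ innerF i₀ j₀ k₀ k) :=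
          fun h => NOh ⟨h, htB.symm⟩
        have hmem : (i, j + 1) ∈ innerF i₀ j₀ k₀ k ∨ (i + 1, j + 1) ∈ innerF i₀ j₀ k₀ k := by
          rcases hcl with ⟨hbv, -⟩ | ⟨-, h⟩ | ⟨hbv, -⟩ | ⟨-, h⟩
          · rw [htA] at hbv; exact absurd hbv (by simp)
          · exact absurd h hna
          · exact absurd hbv (by simp)
          · exact h
        have key : (i, j + 1) ∈ innerF i₀ j₀ k₀ k ∧ ¬((i + 1, j + 1) ∈ innerF i₀ j₀ k₀ k)
            ∧ ¬(k (i + 1, j) < k (i, j)) := by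
          simp only [memP_iff] at hmem hna ⊢
          omega
        refine ⟨hi, hj, key.1, key.2.1, ?_, ?_⟩
        · simp [bSE, htA, htB]
        · simp [isWhite, key.2.2]
    | false =>
        exfalso
        have hnd : ¬((i + 1, j) ∈ innerF i₀ j₀ k₀ k ∨ (i, j + 1) ∈ innerF i₀ j₀ k₀ k) :=
          fun h => NOd ⟨⟨Or.inl hACq, Or.inr ⟨htA, h⟩⟩, htA.symm⟩
        have hmem : ((i, j) ∈ innerF i₀ j₀ k₀ k ∨ (i, j + 1) ∈ innerF i₀ j₀ k₀ k) ∨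
            ((i, j) ∈ innerF i₀ j₀ k₀ k ∨ (i + 1, j) ∈ innerF i₀ j₀ k₀ k) := by
          rcases hcl with ⟨-, h⟩ | ⟨hbv, -⟩ | ⟨-, h⟩ | ⟨hbv, -⟩
          · exact Or.inl h
          · rw [htB] at hbv; exact absurd hbv (by simp)
          · exact Or.inr h
          · rw [htA, htB] at hbv; exact absurd hbv (by simp)
        simp only [memP_iff] at hmem hnd
        omega
  · -- unsplit
    have hADq : k (i + 1, j) = k (i, j + 1) := by
      have h := htA; rw [tAD_eq, decide_eq_false_iff_not, ne_eq, not_not] at h; exact h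
    have hACq : k (i, j) = k (i + 1, j + 1) := by
      have h := htB; rw [tBC_eq, decide_eq_false_iff_not, ne_eq, not_not] at h; exact h
    cases b with
    | true =>
        exfalso
        rcases hcl with ⟨hbv, -⟩ | ⟨hbv, -⟩ | ⟨hbv, -⟩ | ⟨hbv, -⟩
        · rw [htA] at hbv; exact absurd hbv (by simp)
        · rw [htB] at hbv; exact absurd hbv (by simp)
        · exact absurd hbv (by simp)
        · rw [htA, htB] at hbv; exact absurd hbv (by simp)
    | false =>
        have hna : ¬((i + 1, j) ∈ innerF i₀ j₀ k₀ k ∨ (i + 1, j + 1) ∈ innerF i₀ j₀ k₀ k) :=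
          fun h => NOh ⟨h, htB.symm⟩
        have hmem : ((i, j) ∈ innerF i₀ j₀ k₀ k ∨ (i, j + 1) ∈ innerF i₀ j₀ k₀ k) ∨
            ((i, j) ∈ innerF i₀ j₀ k₀ k ∨ (i + 1, j) ∈ innerF i₀ j₀ k₀ k) ∨
            ((i, j + 1) ∈ innerF i₀ j₀ k₀ k ∨ (i + 1, j + 1) ∈ innerF i₀ j₀ k₀ k) := by
          rcases hcl with ⟨-, h⟩ | ⟨-, h⟩ | ⟨-, h⟩ | ⟨-, h⟩
          · exact Or.inl h
          · exact absurd h hna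
          · exact Or.inr (Or.inl h)
          · exact Or.inr (Or.inr h)
        have key : (i, j + 1) ∈ innerF i₀ j₀ k₀ k ∧ ¬((i + 1, j + 1) ∈ innerF i₀ j₀ k₀ k)
            ∧ k (i + 1, j) < k (i, j) := by
          simp only [memP_iff] at hmem hna ⊢
          omega
        refine ⟨hi, hj, key.1, key.2.1, ?_, ?_⟩
        · simp [bSE, htA, htB]
        · simp [isWhite, key.2.2]

lemma fwd_NW (hstep : SteppedSurface k) {i j : ℤ} {b : Bool}
    (hx : (((i, j), b) : Vtx) ∈ VleftNW i₀ j₀ k (EG i₀ j₀ k₀ k)) :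
    i < i₀ ∧ j₀ ≤ j ∧ (i + 1, j) ∈ innerF i₀ j₀ k₀ k ∧
      ¬((i, j) ∈ innerF i₀ j₀ k₀ k) ∧ b = bNW i₀ j₀ k₀ k (i, j) ∧
      isWhite k ((i, j), b) = true := by
  obtain ⟨hVG, hi, hj, hNI⟩ := hx
  replace hi : i < i₀ := hi
  replace hj : j₀ ≤ j := hj
  have NIh : ¬(((i, j) ∈ innerF i₀ j₀ k₀ k ∨ (i, j + 1) ∈ innerF i₀ j₀ k₀ k) ∧
      b = Edge.tAD k (i, j)) := by
    rintro ⟨h1, h2⟩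
    exact hNI ⟨Edge.h i j, (hmem_iff i₀ j₀ k₀ k i j).2 h1, Or.inl trivial, by rw [h2]; rfl⟩
  have NId : ¬(Edge.d i j ∈ EG i₀ j₀ k₀ k ∧ b = Edge.tBC k (i, j)) := by
    rintro ⟨h1, h2⟩
    exact hNI ⟨Edge.d i j, h1, Or.inr trivial, by rw [h2]; rfl⟩
  rw [dmem_iff] at NId
  have hcl := memVG_elim i₀ j₀ k₀ hstep hVG
  have hB := stepX' hstep i j
  have hD := stepY' hstep i j
  have hBC := stepY' hstep (i + 1) j
  have hDC := stepX' hstep i (j + 1)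
  rcases Bool.eq_false_or_eq_true (Edge.tAD k (i, j)) with htA | htA <;>
    rcases Bool.eq_false_or_eq_true (Edge.tBC k (i, j)) with htB | htB
  · exact absurd ⟨htA, htB⟩ (split_excl hstep i j)
  · -- AC split
    have hADq : k (i + 1, j) ≠ k (i, j + 1) := by
      have h := htA; rwa [tAD_eq, decide_eq_true_eq] at h
    have hACq : k (i, j) = k (i + 1, j + 1) := by
      have h := htB; rw [tBC_eq, decide_eq_false_iff_not, ne_eq, not_not] at h; exact h
    cases b with
    | true =>
        have hna : ¬((i, j) ∈ innerF i₀ j₀ k₀ k ∨ (i, j + 1) ∈ innerF i₀ j₀ k₀ k) :=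
          fun h => NIh ⟨h, by rw [htA]⟩
        have hmem : (i, j + 1) ∈ innerF i₀ j₀ k₀ k ∨ (i + 1, j + 1) ∈ innerF i₀ j₀ k₀ k := by
          rcases hcl with ⟨-, h⟩ | ⟨hbv, -⟩ | ⟨hbv, -⟩ | ⟨-, h⟩
          · exact absurd h hna
          · rw [htB] at hbv; exact absurd hbv (by simp)
          · exact absurd hbv (by simp)
          · exact h
        have hγ : (i + 1, j + 1) ∈ innerF i₀ j₀ k₀ k := by
          rcases hmem with h | h
          · exact absurd (Or.inr h) hna
          · exact h
        have key : (i + 1, j) ∈ innerF i₀ j₀ k₀ k ∧ ¬((i, j) ∈ innerF i₀ j₀ k₀ k)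
            ∧ ¬(k (i + 1, j) < k (i, j)) := by
          have hγ' := hγ
          have hna' := hna
          simp only [memP_iff] at hγ' hna' ⊢
          omega
        refine ⟨hi, hj, key.1, key.2.1, ?_, ?_⟩
        · simp [bNW, htA, hγ]
        · simp [isWhite, key.2.2]
    | false =>
        have hnd : ¬((i, j) ∈ innerF i₀ j₀ k₀ k ∨ (i + 1, j + 1) ∈ innerF i₀ j₀ k₀ k) :=
          fun h => NId ⟨⟨Or.inr hADq, Or.inl ⟨htA, h⟩⟩, htB.symm⟩
        have hmem : ((i + 1, j) ∈ innerF i₀ j₀ k₀ k ∨ (i + 1, j + 1) ∈ innerF i₀ j₀ k₀ k) ∨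
            ((i, j) ∈ innerF i₀ j₀ k₀ k ∨ (i + 1, j) ∈ innerF i₀ j₀ k₀ k) := by
          rcases hcl with ⟨hbv, -⟩ | ⟨-, h⟩ | ⟨-, h⟩ | ⟨hbv, -⟩
          · rw [htA] at hbv; exact absurd hbv (by simp)
          · exact Or.inl h
          · exact Or.inr h
          · rw [htA, htB] at hbv; exact absurd hbv (by simp)
        have key : (i + 1, j) ∈ innerF i₀ j₀ k₀ k ∧ ¬((i, j) ∈ innerF i₀ j₀ k₀ k)
            ∧ k (i + 1, j) < k (i, j) := by
          simp only [memP_iff] at hmem hnd ⊢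
          omega
        refine ⟨hi, hj, key.1, key.2.1, ?_, ?_⟩
        · have hnγ : ¬((i + 1, j + 1) ∈ innerF i₀ j₀ k₀ k) := fun h => hnd (Or.inr h)
          simp [bNW, htA, hnγ]
        · simp [isWhite, key.2.2]
  · -- BD split
    have hADq : k (i + 1, j) = k (i, j + 1) := by
      have h := htA; rw [tAD_eq, decide_eq_false_iff_not, ne_eq, not_not] at h; exact h
    have hACq : k (i, j) ≠ k (i + 1, j + 1) := by
      have h := htB; rwa [tBC_eq, decide_eq_true_eq] at h
    cases b with
    | false =>
        have hna : ¬((i, j) ∈ innerF i₀ j₀ k₀ k ∨ (i, j + 1) ∈ innerF i₀ j₀ k₀ k) :=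
          fun h => NIh ⟨h, by rw [htA]⟩
        have hmem : (i, j) ∈ innerF i₀ j₀ k₀ k ∨ (i + 1, j) ∈ innerF i₀ j₀ k₀ k := by
          rcases hcl with ⟨-, h⟩ | ⟨hbv, -⟩ | ⟨-, h⟩ | ⟨hbv, -⟩
          · exact absurd h hna
          · rw [htB] at hbv; exact absurd hbv (by simp)
          · exact h
          · rw [htA, htB] at hbv; exact absurd hbv (by simp)
        have key : (i + 1, j) ∈ innerF i₀ j₀ k₀ k ∧ ¬((i, j) ∈ innerF i₀ j₀ k₀ k)
            ∧ k (i + 1, j) < k (i, j) := by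
          simp only [memP_iff] at hmem hna ⊢
          omega
        refine ⟨hi, hj, key.1, key.2.1, ?_, ?_⟩
        · simp [bNW, htA]
        · simp [isWhite, key.2.2]
    | true =>
        exfalso
        have hnd : ¬((i + 1, j) ∈ innerF i₀ j₀ k₀ k ∨ (i, j + 1) ∈ innerF i₀ j₀ k₀ k) :=
          fun h => NId ⟨⟨Or.inl hACq, Or.inr ⟨htA, h⟩⟩, htB.symm⟩
        have hmem : ((i + 1, j) ∈ innerF i₀ j₀ k₀ k ∨ (i + 1, j + 1) ∈ innerF i₀ j₀ k₀ k) ∨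
            ((i, j + 1) ∈ innerF i₀ j₀ k₀ k ∨ (i + 1, j + 1) ∈ innerF i₀ j₀ k₀ k) := by
          rcases hcl with ⟨hbv, -⟩ | ⟨-, h⟩ | ⟨hbv, -⟩ | ⟨-, h⟩
          · rw [htA] at hbv; exact absurd hbv (by simp)
          · exact Or.inl h
          · exact absurd hbv (by simp)
          · exact Or.inr h
        simp only [memP_iff] at hmem hnd
        omega
  · -- unsplit
    have hADq : k (i + 1, j) = k (i, j + 1) := by
      have h := htA; rw [tAD_eq, decide_eq_false_iff_not, ne_eq, not_not] at h; exact h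
    have hACq : k (i, j) = k (i + 1, j + 1) := by
      have h := htB; rw [tBC_eq, decide_eq_false_iff_not, ne_eq, not_not] at h; exact h
    cases b with
    | true =>
        exfalso
        rcases hcl with ⟨hbv, -⟩ | ⟨hbv, -⟩ | ⟨hbv, -⟩ | ⟨hbv, -⟩
        · rw [htA] at hbv; exact absurd hbv (by simp)
        · rw [htB] at hbv; exact absurd hbv (by simp)
        · exact absurd hbv (by simp)
        · rw [htA, htB] at hbv; exact absurd hbv (by simp)
    | false =>
        have hna : ¬((i, j) ∈ innerF i₀ j₀ k₀ k ∨ (i, j + 1) ∈ innerF i₀ j₀ k₀ k) :=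
          fun h => NIh ⟨h, by rw [htA]⟩
        have hmem : ((i + 1, j) ∈ innerF i₀ j₀ k₀ k ∨ (i + 1, j + 1) ∈ innerF i₀ j₀ k₀ k) ∨
            ((i, j) ∈ innerF i₀ j₀ k₀ k ∨ (i + 1, j) ∈ innerF i₀ j₀ k₀ k) ∨
            ((i, j + 1) ∈ innerF i₀ j₀ k₀ k ∨ (i + 1, j + 1) ∈ innerF i₀ j₀ k₀ k) := by
          rcases hcl with ⟨-, h⟩ | ⟨-, h⟩ | ⟨-, h⟩ | ⟨-, h⟩
          · exact absurd h hna
          · exact Or.inl h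
          · exact Or.inr (Or.inl h)
          · exact Or.inr (Or.inr h)
        have key : (i + 1, j) ∈ innerF i₀ j₀ k₀ k ∧ ¬((i, j) ∈ innerF i₀ j₀ k₀ k)
            ∧ k (i + 1, j) < k (i, j) := by
          simp only [memP_iff] at hmem hna ⊢
          omega
        refine ⟨hi, hj, key.1, key.2.1, ?_, ?_⟩
        · simp [bNW, htA]
        · simp [isWhite, key.2.2]

lemma fwd_NE (hstep : SteppedSurface k) {i j : ℤ} {b : Bool}
    (hx : (((i, j), b) : Vtx) ∈ VrightNE i₀ j₀ k (EG i₀ j₀ k₀ k)) :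
    i₀ ≤ i ∧ j₀ ≤ j ∧ (i, j) ∈ innerF i₀ j₀ k₀ k ∧
      ¬((i + 1, j) ∈ innerF i₀ j₀ k₀ k) ∧ b = bNE i₀ j₀ k₀ k (i, j) ∧
      isWhite k ((i, j), b) = false := by
  obtain ⟨hVG, hi, hj, hNO⟩ := hx
  replace hi : i₀ ≤ i := hi
  replace hj : j₀ ≤ j := hj
  have NOh : ¬(((i + 1, j) ∈ innerF i₀ j₀ k₀ k ∨ (i + 1, j + 1) ∈ innerF i₀ j₀ k₀ k) ∧
      b = Edge.tBC k (i, j)) := by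
    rintro ⟨h1, h2⟩
    refine hNO ⟨Edge.h (i + 1) j, (hmem_iff i₀ j₀ k₀ k (i + 1) j).2 h1, Or.inl trivial, ?_⟩
    show (((i + 1 - 1, j), Edge.tBC k (i + 1 - 1, j)) : Vtx) = ((i, j), b)
    rw [show i + 1 - 1 = i from by ring, h2]
  have NOd : ¬(Edge.d i j ∈ EG i₀ j₀ k₀ k ∧ b = Edge.tAD k (i, j)) := by
    rintro ⟨h1, h2⟩
    exact hNO ⟨Edge.d i j, h1, Or.inr trivial, by rw [h2]; rfl⟩
  rw [dmem_iff] at NOd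
  have hcl := memVG_elim i₀ j₀ k₀ hstep hVG
  have hB := stepX' hstep i j
  have hD := stepY' hstep i j
  have hBC := stepY' hstep (i + 1) j
  have hDC := stepX' hstep i (j + 1)
  rcases Bool.eq_false_or_eq_true (Edge.tAD k (i, j)) with htA | htA <;>
    rcases Bool.eq_false_or_eq_true (Edge.tBC k (i, j)) with htB | htB
  · exact absurd ⟨htA, htB⟩ (split_excl hstep i j)
  · -- AC split
    have hADq : k (i + 1, j) ≠ k (i, j + 1) := by
      have h := htA; rwa [tAD_eq, decide_eq_true_eq] at h
    have hACq : k (i, j) = k (i + 1, j + 1) := by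
      have h := htB; rw [tBC_eq, decide_eq_false_iff_not, ne_eq, not_not] at h; exact h
    cases b with
    | true =>
        exfalso
        have hnd : ¬((i, j) ∈ innerF i₀ j₀ k₀ k ∨ (i + 1, j + 1) ∈ innerF i₀ j₀ k₀ k) :=
          fun h => NOd ⟨⟨Or.inr hADq, Or.inl ⟨htA, h⟩⟩, htA.symm⟩
        have hmem : ((i, j) ∈ innerF i₀ j₀ k₀ k ∨ (i, j + 1) ∈ innerF i₀ j₀ k₀ k) ∨
            ((i, j + 1) ∈ innerF i₀ j₀ k₀ k ∨ (i + 1, j + 1) ∈ innerF i₀ j₀ k₀ k) := by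
          rcases hcl with ⟨-, h⟩ | ⟨hbv, -⟩ | ⟨hbv, -⟩ | ⟨-, h⟩
          · exact Or.inl h
          · rw [htB] at hbv; exact absurd hbv (by simp)
          · exact absurd hbv (by simp)
          · exact Or.inr h
        simp only [memP_iff] at hmem hnd
        omega
    | false =>
        have hna : ¬((i + 1, j) ∈ innerF i₀ j₀ k₀ k ∨ (i + 1, j + 1) ∈ innerF i₀ j₀ k₀ k) :=
          fun h => NOh ⟨h, htB.symm⟩
        have hmem : (i, j) ∈ innerF i₀ j₀ k₀ k ∨ (i + 1, j) ∈ innerF i₀ j₀ k₀ k := by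
          rcases hcl with ⟨hbv, -⟩ | ⟨-, h⟩ | ⟨-, h⟩ | ⟨hbv, -⟩
          · rw [htA] at hbv; exact absurd hbv (by simp)
          · exact absurd h hna
          · exact h
          · rw [htA, htB] at hbv; exact absurd hbv (by simp)
        have key : (i, j) ∈ innerF i₀ j₀ k₀ k ∧ ¬((i + 1, j) ∈ innerF i₀ j₀ k₀ k)
            ∧ ¬(k (i + 1, j) < k (i, j)) := by
          simp only [memP_iff] at hmem hna ⊢
          omega
        refine ⟨hi, hj, key.1, key.2.1, ?_, ?_⟩
        · simp [bNE, htB]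
        · simp [isWhite, key.2.2]
  · -- BD split
    have hADq : k (i + 1, j) = k (i, j + 1) := by
      have h := htA; rw [tAD_eq, decide_eq_false_iff_not, ne_eq, not_not] at h; exact h
    have hACq : k (i, j) ≠ k (i + 1, j + 1) := by
      have h := htB; rwa [tBC_eq, decide_eq_true_eq] at h
    cases b with
    | false =>
        have hnd : ¬((i + 1, j) ∈ innerF i₀ j₀ k₀ k ∨ (i, j + 1) ∈ innerF i₀ j₀ k₀ k) :=
          fun h => NOd ⟨⟨Or.inl hACq, Or.inr ⟨htA, h⟩⟩, htA.symm⟩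
        have hmem : ((i, j) ∈ innerF i₀ j₀ k₀ k ∨ (i, j + 1) ∈ innerF i₀ j₀ k₀ k) ∨
            ((i, j) ∈ innerF i₀ j₀ k₀ k ∨ (i + 1, j) ∈ innerF i₀ j₀ k₀ k) := by
          rcases hcl with ⟨-, h⟩ | ⟨hbv, -⟩ | ⟨-, h⟩ | ⟨hbv, -⟩
          · exact Or.inl h
          · rw [htB] at hbv; exact absurd hbv (by simp)
          · exact Or.inr h
          · rw [htA, htB] at hbv; exact absurd hbv (by simp)
        have key : (i, j) ∈ innerF i₀ j₀ k₀ k ∧ ¬((i + 1, j) ∈ innerF i₀ j₀ k₀ k)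
            ∧ ¬(k (i + 1, j) < k (i, j)) := by
          simp only [memP_iff] at hmem hnd ⊢
          omega
        refine ⟨hi, hj, key.1, key.2.1, ?_, ?_⟩
        · have hnδ : ¬((i, j + 1) ∈ innerF i₀ j₀ k₀ k) := fun h => hnd (Or.inr h)
          simp [bNE, htA, htB, hnδ]
        · simp [isWhite, key.2.2]
    | true =>
        have hna : ¬((i + 1, j) ∈ innerF i₀ j₀ k₀ k ∨ (i + 1, j + 1) ∈ innerF i₀ j₀ k₀ k) :=
          fun h => NOh ⟨h, htB.symm⟩
        have hmem : (i, j + 1) ∈ innerF i₀ j₀ k₀ k ∨ (i + 1, j + 1) ∈ innerF i₀ j₀ k₀ k := by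
          rcases hcl with ⟨hbv, -⟩ | ⟨-, h⟩ | ⟨hbv, -⟩ | ⟨-, h⟩
          · rw [htA] at hbv; exact absurd hbv (by simp)
          · exact absurd h hna
          · exact absurd hbv (by simp)
          · exact h
        have hδ : (i, j + 1) ∈ innerF i₀ j₀ k₀ k := by
          rcases hmem with h | h
          · exact h
          · exact absurd (Or.inr h) hna
        have key : (i, j) ∈ innerF i₀ j₀ k₀ k ∧ ¬((i + 1, j) ∈ innerF i₀ j₀ k₀ k)
            ∧ k (i + 1, j) < k (i, j) := by
          have hδ' := hδ
          have hna' := hna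
          simp only [memP_iff] at hδ' hna' ⊢
          omega
        refine ⟨hi, hj, key.1, key.2.1, ?_, ?_⟩
        · simp [bNE, htB, hδ]
        · simp [isWhite, key.2.2]
  · -- unsplit
    have hADq : k (i + 1, j) = k (i, j + 1) := by
      have h := htA; rw [tAD_eq, decide_eq_false_iff_not, ne_eq, not_not] at h; exact h
    have hACq : k (i, j) = k (i + 1, j + 1) := by
      have h := htB; rw [tBC_eq, decide_eq_false_iff_not, ne_eq, not_not] at h; exact h
    cases b with
    | true =>
        exfalso
        rcases hcl with ⟨hbv, -⟩ | ⟨hbv, -⟩ | ⟨hbv, -⟩ | ⟨hbv, -⟩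
        · rw [htA] at hbv; exact absurd hbv (by simp)
        · rw [htB] at hbv; exact absurd hbv (by simp)
        · exact absurd hbv (by simp)
        · rw [htA, htB] at hbv; exact absurd hbv (by simp)
    | false =>
        have hna : ¬((i + 1, j) ∈ innerF i₀ j₀ k₀ k ∨ (i + 1, j + 1) ∈ innerF i₀ j₀ k₀ k) :=
          fun h => NOh ⟨h, htB.symm⟩
        have hmem : ((i, j) ∈ innerF i₀ j₀ k₀ k ∨ (i, j + 1) ∈ innerF i₀ j₀ k₀ k) ∨
            ((i, j) ∈ innerF i₀ j₀ k₀ k ∨ (i + 1, j) ∈ innerF i₀ j₀ k₀ k) ∨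
            ((i, j + 1) ∈ innerF i₀ j₀ k₀ k ∨ (i + 1, j + 1) ∈ innerF i₀ j₀ k₀ k) := by
          rcases hcl with ⟨-, h⟩ | ⟨-, h⟩ | ⟨-, h⟩ | ⟨-, h⟩
          · exact Or.inl h
          · exact absurd h hna
          · exact Or.inr (Or.inl h)
          · exact Or.inr (Or.inr h)
        have key : (i, j) ∈ innerF i₀ j₀ k₀ k ∧ ¬((i + 1, j) ∈ innerF i₀ j₀ k₀ k)
            ∧ ¬(k (i + 1, j) < k (i, j)) := by
          simp only [memP_iff] at hmem hna ⊢
          omega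
        refine ⟨hi, hj, key.1, key.2.1, ?_, ?_⟩
        · simp [bNE, htB]
        · simp [isWhite, key.2.2]

lemma tBC_true_of_valid {i j : ℤ}
    (hv : k (i, j) ≠ k (i + 1, j + 1) ∨ k (i + 1, j) ≠ k (i, j + 1))
    (htA : Edge.tAD k (i, j) = false) : Edge.tBC k (i, j) = true := by
  rcases Bool.eq_false_or_eq_true (Edge.tBC k (i, j)) with h2 | h2
  · exact h2
  · exfalso
    rw [tAD_eq, decide_eq_false_iff_not, ne_eq, not_not] at htA
    rw [tBC_eq, decide_eq_false_iff_not, ne_eq, not_not] at h2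
    rcases hv with h | h
    · exact h h2
    · exact h htA

lemma ex_SW (hstep : SteppedSurface k) (hfund : ∀ f : ℤ × ℤ, fund f ≤ k f) {j : ℤ}
    (hj : j < j₀) (hJ : (i₀, j + 1) ∈ innerF i₀ j₀ k₀ k) :
    (((aRow i₀ j₀ k₀ k (j + 1) - 1, j),
        bSW i₀ j₀ k₀ k (aRow i₀ j₀ k₀ k (j + 1) - 1, j)) : Vtx)
      ∈ VleftSW i₀ j₀ k (EG i₀ j₀ k₀ k) := by
  obtain ⟨hmem, hmin⟩ := aRow_spec i₀ j₀ k₀ hfund (j + 1) ⟨i₀, hJ⟩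
  set a := aRow i₀ j₀ k₀ k (j + 1) with ha
  have hale : a ≤ i₀ := hmin i₀ hJ
  have hγ : (a, j + 1) ∈ innerF i₀ j₀ k₀ k := hmem
  have hδ : ¬((a - 1, j + 1) ∈ innerF i₀ j₀ k₀ k) := fun h => by
    have := hmin _ h; omega
  have hα : ¬((a - 1, j) ∈ innerF i₀ j₀ k₀ k) := fun h =>
    hδ (stepTowardU i₀ j₀ k₀ hstep hj h)
  refine ⟨?_, by show a - 1 < i₀; omega, hj, ?_⟩
  · -- x ∈ VG
    rcases Bool.eq_false_or_eq_true (Edge.tAD k (a - 1, j)) with htA | htA <;>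
      rcases Bool.eq_false_or_eq_true (Edge.tBC k (a - 1, j)) with htB | htB
    · exact absurd ⟨htA, htB⟩ (split_excl hstep (a - 1) j)
    · -- AC: b = true, witness v (a-1) (j+1)
      refine ⟨Edge.v (a - 1) (j + 1), (vmem_iff i₀ j₀ k₀ k (a - 1) (j + 1)).2
        (Or.inr (by rw [show a - 1 + 1 = a from by ring]; exact hγ)), Or.inl ?_⟩
      show (((a - 1, j), bSW i₀ j₀ k₀ k (a - 1, j)) : Vtx) =
        ((a - 1, j + 1 - 1), Edge.tAD k (a - 1, j + 1 - 1) || Edge.tBC k (a - 1, j + 1 - 1))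
      rw [show j + 1 - 1 = j from by ring]
      simp [bSW, htA]
    · -- BD
      by_cases hβ : (a, j) ∈ innerF i₀ j₀ k₀ k
      · -- b = false, witness v (a-1) j (top end)
        refine ⟨Edge.v (a - 1) j, (vmem_iff i₀ j₀ k₀ k (a - 1) j).2
          (Or.inr (by rw [show a - 1 + 1 = a from by ring]; exact hβ)), Or.inr ?_⟩
        show (((a - 1, j), bSW i₀ j₀ k₀ k (a - 1, j)) : Vtx) = ((a - 1, j), false)
        simp [bSW, htA, htB, hβ]
      · -- b = true, witness v (a-1) (j+1)
        refine ⟨Edge.v (a - 1) (j + 1), (vmem_iff i₀ j₀ k₀ k (a - 1) (j + 1)).2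
          (Or.inr (by rw [show a - 1 + 1 = a from by ring]; exact hγ)), Or.inl ?_⟩
        show (((a - 1, j), bSW i₀ j₀ k₀ k (a - 1, j)) : Vtx) =
          ((a - 1, j + 1 - 1), Edge.tAD k (a - 1, j + 1 - 1) || Edge.tBC k (a - 1, j + 1 - 1))
        rw [show j + 1 - 1 = j from by ring]
        simp [bSW, htA, htB, hβ]
    · -- unsplit: b = false, witness h a j (left end)
      refine ⟨Edge.h a j, (hmem_iff i₀ j₀ k₀ k a j).2 (Or.inr hγ), Or.inl ?_⟩
      show (((a - 1, j), bSW i₀ j₀ k₀ k (a - 1, j)) : Vtx) = ((a - 1, j), Edge.tBC k (a - 1, j))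
      simp [bSW, htA, htB]
  · -- no incoming horizontal/diagonal edge
    rintro ⟨e, he, hhd, hend⟩
    cases e with
    | h u w =>
        replace hend : (((u, w), Edge.tAD k (u, w)) : Vtx) =
          ((a - 1, j), bSW i₀ j₀ k₀ k (a - 1, j)) := hend
        rw [Prod.mk.injEq, Prod.mk.injEq] at hend
        obtain ⟨⟨hu, hw⟩, -⟩ := hend
        subst hu; subst hw
        rw [hmem_iff] at he
        rcases he with h | h
        · exact hα h
        · exact hδ h
    | v u w => rcases hhd with h | h <;> exact h
    | d u w =>
        replace hend : (((u, w), Edge.tBC k (u, w)) : Vtx) =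
          ((a - 1, j), bSW i₀ j₀ k₀ k (a - 1, j)) := hend
        rw [Prod.mk.injEq, Prod.mk.injEq] at hend
        obtain ⟨⟨hu, hw⟩, hbeq⟩ := hend
        subst hu; subst hw
        rw [dmem_iff] at he
        obtain ⟨hv, hside⟩ := he
        rcases hside with ⟨htA, hf⟩ | ⟨htA, hf⟩
        · have htB := tBC_false hstep htA
          rw [htB] at hbeq
          simp [bSW, htA] at hbeq
        · have htB := tBC_true_of_valid hv htA
          rw [htB] at hbeq
          rw [show a - 1 + 1 = a from by ring] at hf
          rcases hf with hf | hf
          · simp [bSW, htA, htB, hf] at hbeq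
          · exact hδ hf

lemma ex_SE (hstep : SteppedSurface k) (hfund : ∀ f : ℤ × ℤ, fund f ≤ k f) {j : ℤ}
    (hj : j < j₀) (hJ : (i₀, j + 1) ∈ innerF i₀ j₀ k₀ k) :
    (((gRow i₀ j₀ k₀ k (j + 1), j),
        bSE i₀ j₀ k₀ k (gRow i₀ j₀ k₀ k (j + 1), j)) : Vtx)
      ∈ VrightSE i₀ j₀ k (EG i₀ j₀ k₀ k) := by
  obtain ⟨hmem, hmax⟩ := gRow_spec i₀ j₀ k₀ hfund (j + 1) ⟨i₀, hJ⟩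
  set g := gRow i₀ j₀ k₀ k (j + 1) with hgdef
  have hge : i₀ ≤ g := hmax i₀ hJ
  have hδ : (g, j + 1) ∈ innerF i₀ j₀ k₀ k := hmem
  have hγ : ¬((g + 1, j + 1) ∈ innerF i₀ j₀ k₀ k) := fun h => by
    have := hmax _ h; omega
  have hβ : ¬((g + 1, j) ∈ innerF i₀ j₀ k₀ k) := fun h =>
    hγ (stepTowardU i₀ j₀ k₀ hstep hj h)
  refine ⟨?_, hge, hj, ?_⟩
  · -- x ∈ VG
    rcases Bool.eq_false_or_eq_true (Edge.tAD k (g, j)) with htA | htA <;>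
      rcases Bool.eq_false_or_eq_true (Edge.tBC k (g, j)) with htB | htB
    · exact absurd ⟨htA, htB⟩ (split_excl hstep g j)
    · -- AC
      by_cases hα : (g, j) ∈ innerF i₀ j₀ k₀ k
      · refine ⟨Edge.v g j, (vmem_iff i₀ j₀ k₀ k g j).2 (Or.inl hα), Or.inr ?_⟩
        show (((g, j), bSE i₀ j₀ k₀ k (g, j)) : Vtx) = ((g, j), false)
        simp [bSE, htA, htB, hα]
      · refine ⟨Edge.v g (j + 1), (vmem_iff i₀ j₀ k₀ k g (j + 1)).2 (Or.inl hδ), Or.inl ?_⟩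
        show (((g, j), bSE i₀ j₀ k₀ k (g, j)) : Vtx) =
          ((g, j + 1 - 1), Edge.tAD k (g, j + 1 - 1) || Edge.tBC k (g, j + 1 - 1))
        rw [show j + 1 - 1 = j from by ring]
        simp [bSE, htA, htB, hα]
    · -- BD : b = true
      refine ⟨Edge.v g (j + 1), (vmem_iff i₀ j₀ k₀ k g (j + 1)).2 (Or.inl hδ), Or.inl ?_⟩
      show (((g, j), bSE i₀ j₀ k₀ k (g, j)) : Vtx) =
        ((g, j + 1 - 1), Edge.tAD k (g, j + 1 - 1) || Edge.tBC k (g, j + 1 - 1))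
      rw [show j + 1 - 1 = j from by ring]
      simp [bSE, htB]
    · -- unsplit : b = false
      refine ⟨Edge.v g (j + 1), (vmem_iff i₀ j₀ k₀ k g (j + 1)).2 (Or.inl hδ), Or.inl ?_⟩
      show (((g, j), bSE i₀ j₀ k₀ k (g, j)) : Vtx) =
        ((g, j + 1 - 1), Edge.tAD k (g, j + 1 - 1) || Edge.tBC k (g, j + 1 - 1))
      rw [show j + 1 - 1 = j from by ring]
      simp [bSE, htA, htB]
  · -- no outgoing horizontal/diagonal edge
    rintro ⟨e, he, hhd, hend⟩
    cases e with
    | h u w =>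
        replace hend : (((u - 1, w), Edge.tBC k (u - 1, w)) : Vtx) =
          ((g, j), bSE i₀ j₀ k₀ k (g, j)) := hend
        rw [Prod.mk.injEq, Prod.mk.injEq] at hend
        obtain ⟨⟨hu, hw⟩, -⟩ := hend
        subst hw
        have hu' : u = g + 1 := by omega
        subst hu'
        rw [hmem_iff] at he
        rcases he with h | h
        · exact hβ h
        · exact hγ h
    | v u w => rcases hhd with h | h <;> exact h
    | d u w =>
        replace hend : (((u, w), Edge.tAD k (u, w)) : Vtx) =
          ((g, j), bSE i₀ j₀ k₀ k (g, j)) := hend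
        rw [Prod.mk.injEq, Prod.mk.injEq] at hend
        obtain ⟨⟨hu, hw⟩, hbeq⟩ := hend
        subst hu; subst hw
        rw [dmem_iff] at he
        obtain ⟨hv, hside⟩ := he
        rcases hside with ⟨htA, hf⟩ | ⟨htA, hf⟩
        · have htB := tBC_false hstep htA
          rw [htA] at hbeq
          rcases hf with hf | hf
          · simp [bSE, htA, htB, hf] at hbeq
          · exact hγ hf
        · have htB := tBC_true_of_valid hv htA
          rw [htA] at hbeq
          simp [bSE, htB] at hbeq

lemma ex_NW (hstep : SteppedSurface k) (hfund : ∀ f : ℤ × ℤ, fund f ≤ k f) {j : ℤ}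
    (hj : j₀ ≤ j) (hJ : (i₀, j) ∈ innerF i₀ j₀ k₀ k) :
    (((aRow i₀ j₀ k₀ k j - 1, j),
        bNW i₀ j₀ k₀ k (aRow i₀ j₀ k₀ k j - 1, j)) : Vtx)
      ∈ VleftNW i₀ j₀ k (EG i₀ j₀ k₀ k) := by
  obtain ⟨hmem, hmin⟩ := aRow_spec i₀ j₀ k₀ hfund j ⟨i₀, hJ⟩
  set a := aRow i₀ j₀ k₀ k j with ha
  have hale : a ≤ i₀ := hmin i₀ hJ
  have hβ : (a, j) ∈ innerF i₀ j₀ k₀ k := hmem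
  have hα : ¬((a - 1, j) ∈ innerF i₀ j₀ k₀ k) := fun h => by
    have := hmin _ h; omega
  have hδ : ¬((a - 1, j + 1) ∈ innerF i₀ j₀ k₀ k) := fun h => by
    have h2 := stepTowardD i₀ j₀ k₀ hstep (by omega) h
    rw [show j + 1 - 1 = j from by ring] at h2
    exact hα h2
  refine ⟨?_, by show a - 1 < i₀; omega, hj, ?_⟩
  · -- x ∈ VG
    rcases Bool.eq_false_or_eq_true (Edge.tAD k (a - 1, j)) with htA | htA <;>
      rcases Bool.eq_false_or_eq_true (Edge.tBC k (a - 1, j)) with htB | htB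
    · exact absurd ⟨htA, htB⟩ (split_excl hstep (a - 1) j)
    · -- AC
      by_cases hγ : (a, j + 1) ∈ innerF i₀ j₀ k₀ k
      · refine ⟨Edge.v (a - 1) (j + 1), (vmem_iff i₀ j₀ k₀ k (a - 1) (j + 1)).2
          (Or.inr (by rw [show a - 1 + 1 = a from by ring]; exact hγ)), Or.inl ?_⟩
        show (((a - 1, j), bNW i₀ j₀ k₀ k (a - 1, j)) : Vtx) =
          ((a - 1, j + 1 - 1), Edge.tAD k (a - 1, j + 1 - 1) || Edge.tBC k (a - 1, j + 1 - 1))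
        rw [show j + 1 - 1 = j from by ring]
        simp [bNW, htA, hγ]
      · refine ⟨Edge.h a j, (hmem_iff i₀ j₀ k₀ k a j).2 (Or.inl hβ), Or.inl ?_⟩
        show (((a - 1, j), bNW i₀ j₀ k₀ k (a - 1, j)) : Vtx) = ((a - 1, j), Edge.tBC k (a - 1, j))
        simp [bNW, htB, hγ]
    · -- BD : b = false, witness v (a-1) j (top end)
      refine ⟨Edge.v (a - 1) j, (vmem_iff i₀ j₀ k₀ k (a - 1) j).2
        (Or.inr (by rw [show a - 1 + 1 = a from by ring]; exact hβ)), Or.inr ?_⟩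
      show (((a - 1, j), bNW i₀ j₀ k₀ k (a - 1, j)) : Vtx) = ((a - 1, j), false)
      simp [bNW, htA]
    · -- unsplit : b = false
      refine ⟨Edge.h a j, (hmem_iff i₀ j₀ k₀ k a j).2 (Or.inl hβ), Or.inl ?_⟩
      show (((a - 1, j), bNW i₀ j₀ k₀ k (a - 1, j)) : Vtx) = ((a - 1, j), Edge.tBC k (a - 1, j))
      simp [bNW, htA, htB]
  · -- no incoming
    rintro ⟨e, he, hhd, hend⟩
    cases e with
    | h u w =>
        replace hend : (((u, w), Edge.tAD k (u, w)) : Vtx) =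
          ((a - 1, j), bNW i₀ j₀ k₀ k (a - 1, j)) := hend
        rw [Prod.mk.injEq, Prod.mk.injEq] at hend
        obtain ⟨⟨hu, hw⟩, -⟩ := hend
        subst hu; subst hw
        rw [hmem_iff] at he
        rcases he with h | h
        · exact hα h
        · exact hδ h
    | v u w => rcases hhd with h | h <;> exact h
    | d u w =>
        replace hend : (((u, w), Edge.tBC k (u, w)) : Vtx) =
          ((a - 1, j), bNW i₀ j₀ k₀ k (a - 1, j)) := hend
        rw [Prod.mk.injEq, Prod.mk.injEq] at hend
        obtain ⟨⟨hu, hw⟩, hbeq⟩ := hend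
        subst hu; subst hw
        rw [dmem_iff] at he
        obtain ⟨hv, hside⟩ := he
        rcases hside with ⟨htA, hf⟩ | ⟨htA, hf⟩
        · have htB := tBC_false hstep htA
          rw [htB] at hbeq
          rw [show a - 1 + 1 = a from by ring] at hf
          rcases hf with hf | hf
          · exact hα hf
          · simp [bNW, htA, hf] at hbeq
        · have htB := tBC_true_of_valid hv htA
          rw [htB] at hbeq
          simp [bNW, htA] at hbeq

lemma ex_NE (hstep : SteppedSurface k) (hfund : ∀ f : ℤ × ℤ, fund f ≤ k f) {j : ℤ}
    (hj : j₀ ≤ j) (hJ : (i₀, j) ∈ innerF i₀ j₀ k₀ k) :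
    (((gRow i₀ j₀ k₀ k j, j),
        bNE i₀ j₀ k₀ k (gRow i₀ j₀ k₀ k j, j)) : Vtx)
      ∈ VrightNE i₀ j₀ k (EG i₀ j₀ k₀ k) := by
  obtain ⟨hmem, hmax⟩ := gRow_spec i₀ j₀ k₀ hfund j ⟨i₀, hJ⟩
  set g := gRow i₀ j₀ k₀ k j with hgdef
  have hge : i₀ ≤ g := hmax i₀ hJ
  have hα : (g, j) ∈ innerF i₀ j₀ k₀ k := hmem
  have hβ : ¬((g + 1, j) ∈ innerF i₀ j₀ k₀ k) := fun h => by
    have := hmax _ h; omega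
  have hγ : ¬((g + 1, j + 1) ∈ innerF i₀ j₀ k₀ k) := fun h => by
    have h2 := stepTowardD i₀ j₀ k₀ hstep (by omega) h
    rw [show j + 1 - 1 = j from by ring] at h2
    exact hβ h2
  refine ⟨?_, hge, hj, ?_⟩
  · -- x ∈ VG
    rcases Bool.eq_false_or_eq_true (Edge.tAD k (g, j)) with htA | htA <;>
      rcases Bool.eq_false_or_eq_true (Edge.tBC k (g, j)) with htB | htB
    · exact absurd ⟨htA, htB⟩ (split_excl hstep g j)
    · -- AC : b = false
      refine ⟨Edge.v g j, (vmem_iff i₀ j₀ k₀ k g j).2 (Or.inl hα), Or.inr ?_⟩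
      show (((g, j), bNE i₀ j₀ k₀ k (g, j)) : Vtx) = ((g, j), false)
      simp [bNE, htB]
    · -- BD
      by_cases hδ : (g, j + 1) ∈ innerF i₀ j₀ k₀ k
      · refine ⟨Edge.v g (j + 1), (vmem_iff i₀ j₀ k₀ k g (j + 1)).2 (Or.inl hδ), Or.inl ?_⟩
        show (((g, j), bNE i₀ j₀ k₀ k (g, j)) : Vtx) =
          ((g, j + 1 - 1), Edge.tAD k (g, j + 1 - 1) || Edge.tBC k (g, j + 1 - 1))
        rw [show j + 1 - 1 = j from by ring]
        simp [bNE, htB, hδ]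
      · refine ⟨Edge.v g j, (vmem_iff i₀ j₀ k₀ k g j).2 (Or.inl hα), Or.inr ?_⟩
        show (((g, j), bNE i₀ j₀ k₀ k (g, j)) : Vtx) = ((g, j), false)
        simp [bNE, hδ]
    · -- unsplit : b = false
      refine ⟨Edge.v g j, (vmem_iff i₀ j₀ k₀ k g j).2 (Or.inl hα), Or.inr ?_⟩
      show (((g, j), bNE i₀ j₀ k₀ k (g, j)) : Vtx) = ((g, j), false)
      simp [bNE, htB]
  · -- no outgoing
    rintro ⟨e, he, hhd, hend⟩
    cases e with
    | h u w =>
        replace hend : (((u - 1, w), Edge.tBC k (u - 1, w)) : Vtx) =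
          ((g, j), bNE i₀ j₀ k₀ k (g, j)) := hend
        rw [Prod.mk.injEq, Prod.mk.injEq] at hend
        obtain ⟨⟨hu, hw⟩, -⟩ := hend
        subst hw
        have hu' : u = g + 1 := by omega
        subst hu'
        rw [hmem_iff] at he
        rcases he with h | h
        · exact hβ h
        · exact hγ h
    | v u w => rcases hhd with h | h <;> exact h
    | d u w =>
        replace hend : (((u, w), Edge.tAD k (u, w)) : Vtx) =
          ((g, j), bNE i₀ j₀ k₀ k (g, j)) := hend
        rw [Prod.mk.injEq, Prod.mk.injEq] at hend
        obtain ⟨⟨hu, hw⟩, hbeq⟩ := hend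
        subst hu; subst hw
        rw [dmem_iff] at he
        obtain ⟨hv, hside⟩ := he
        rcases hside with ⟨htA, hf⟩ | ⟨htA, hf⟩
        · have htB := tBC_false hstep htA
          rw [htA] at hbeq
          simp [bNE, htB] at hbeq
        · have htB := tBC_true_of_valid hv htA
          rw [htA] at hbeq
          rcases hf with hf | hf
          · exact hβ hf
          · simp [bNE, htB, hf] at hbeq

variable (k) in
noncomputable def FSW (j : ℤ) : Vtx :=
  ((aRow i₀ j₀ k₀ k (j + 1) - 1, j), bSW i₀ j₀ k₀ k (aRow i₀ j₀ k₀ k (j + 1) - 1, j))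

variable (k) in
noncomputable def FSE (j : ℤ) : Vtx :=
  ((gRow i₀ j₀ k₀ k (j + 1), j), bSE i₀ j₀ k₀ k (gRow i₀ j₀ k₀ k (j + 1), j))

variable (k) in
noncomputable def FNW (j : ℤ) : Vtx :=
  ((aRow i₀ j₀ k₀ k j - 1, j), bNW i₀ j₀ k₀ k (aRow i₀ j₀ k₀ k j - 1, j))

variable (k) in
noncomputable def FNE (j : ℤ) : Vtx :=
  ((gRow i₀ j₀ k₀ k j, j), bNE i₀ j₀ k₀ k (gRow i₀ j₀ k₀ k j, j))

variable (k) in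
def JS : Set ℤ := {j | j < j₀ ∧ (i₀, j + 1) ∈ innerF i₀ j₀ k₀ k}

variable (k) in
def JN : Set ℤ := {j | j₀ ≤ j ∧ (i₀, j) ∈ innerF i₀ j₀ k₀ k}

lemma setEq_SW (hstep : SteppedSurface k) (hfund : ∀ f : ℤ × ℤ, fund f ≤ k f) :
    VleftSW i₀ j₀ k (EG i₀ j₀ k₀ k) = FSW i₀ j₀ k₀ k '' JS i₀ j₀ k₀ k := by
  ext x
  constructor
  · intro hx
    obtain ⟨⟨i, j⟩, b⟩ := x
    obtain ⟨hi, hj, hγ, hδ, hb, -⟩ := fwd_SW i₀ j₀ k₀ hstep hx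
    have hJ : (i₀, j + 1) ∈ innerF i₀ j₀ k₀ k :=
      rowIntL i₀ j₀ k₀ hstep hγ (by omega) le_rfl
    refine ⟨j, ⟨hj, hJ⟩, ?_⟩
    obtain ⟨hmem, hmin⟩ := aRow_spec i₀ j₀ k₀ hfund (j + 1) ⟨i₀, hJ⟩
    have h1 : aRow i₀ j₀ k₀ k (j + 1) ≤ i + 1 := hmin _ hγ
    have h2 : ¬(aRow i₀ j₀ k₀ k (j + 1) ≤ i) := fun hle =>
      hδ (rowIntL i₀ j₀ k₀ hstep hmem hle (by omega))
    have heq : aRow i₀ j₀ k₀ k (j + 1) - 1 = i := by omega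
    show (((aRow i₀ j₀ k₀ k (j + 1) - 1, j),
        bSW i₀ j₀ k₀ k (aRow i₀ j₀ k₀ k (j + 1) - 1, j)) : Vtx) = ((i, j), b)
    rw [heq, hb]
  · rintro ⟨j, ⟨hj, hJ⟩, rfl⟩
    exact ex_SW i₀ j₀ k₀ hstep hfund hj hJ

lemma setEq_SE (hstep : SteppedSurface k) (hfund : ∀ f : ℤ × ℤ, fund f ≤ k f) :
    VrightSE i₀ j₀ k (EG i₀ j₀ k₀ k) = FSE i₀ j₀ k₀ k '' JS i₀ j₀ k₀ k := by
  ext x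
  constructor
  · intro hx
    obtain ⟨⟨i, j⟩, b⟩ := x
    obtain ⟨hi, hj, hδ, hγ, hb, -⟩ := fwd_SE i₀ j₀ k₀ hstep hx
    have hJ : (i₀, j + 1) ∈ innerF i₀ j₀ k₀ k :=
      rowIntR i₀ j₀ k₀ hstep hδ le_rfl hi
    refine ⟨j, ⟨hj, hJ⟩, ?_⟩
    obtain ⟨hmem, hmax⟩ := gRow_spec i₀ j₀ k₀ hfund (j + 1) ⟨i₀, hJ⟩
    have h1 : i ≤ gRow i₀ j₀ k₀ k (j + 1) := hmax _ hδ
    have h2 : ¬(i + 1 ≤ gRow i₀ j₀ k₀ k (j + 1)) := fun hle =>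
      hγ (rowIntR i₀ j₀ k₀ hstep hmem (by omega) hle)
    have heq : gRow i₀ j₀ k₀ k (j + 1) = i := by omega
    show (((gRow i₀ j₀ k₀ k (j + 1), j),
        bSE i₀ j₀ k₀ k (gRow i₀ j₀ k₀ k (j + 1), j)) : Vtx) = ((i, j), b)
    rw [heq, hb]
  · rintro ⟨j, ⟨hj, hJ⟩, rfl⟩
    exact ex_SE i₀ j₀ k₀ hstep hfund hj hJ

lemma setEq_NW (hstep : SteppedSurface k) (hfund : ∀ f : ℤ × ℤ, fund f ≤ k f) :
    VleftNW i₀ j₀ k (EG i₀ j₀ k₀ k) = FNW i₀ j₀ k₀ k '' JN i₀ j₀ k₀ k := by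
  ext x
  constructor
  · intro hx
    obtain ⟨⟨i, j⟩, b⟩ := x
    obtain ⟨hi, hj, hβ, hα, hb, -⟩ := fwd_NW i₀ j₀ k₀ hstep hx
    have hJ : (i₀, j) ∈ innerF i₀ j₀ k₀ k :=
      rowIntL i₀ j₀ k₀ hstep hβ (by omega) le_rfl
    refine ⟨j, ⟨hj, hJ⟩, ?_⟩
    obtain ⟨hmem, hmin⟩ := aRow_spec i₀ j₀ k₀ hfund j ⟨i₀, hJ⟩
    have h1 : aRow i₀ j₀ k₀ k j ≤ i + 1 := hmin _ hβ
    have h2 : ¬(aRow i₀ j₀ k₀ k j ≤ i) := fun hle =>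
      hα (rowIntL i₀ j₀ k₀ hstep hmem hle (by omega))
    have heq : aRow i₀ j₀ k₀ k j - 1 = i := by omega
    show (((aRow i₀ j₀ k₀ k j - 1, j),
        bNW i₀ j₀ k₀ k (aRow i₀ j₀ k₀ k j - 1, j)) : Vtx) = ((i, j), b)
    rw [heq, hb]
  · rintro ⟨j, ⟨hj, hJ⟩, rfl⟩
    exact ex_NW i₀ j₀ k₀ hstep hfund hj hJ

lemma setEq_NE (hstep : SteppedSurface k) (hfund : ∀ f : ℤ × ℤ, fund f ≤ k f) :
    VrightNE i₀ j₀ k (EG i₀ j₀ k₀ k) = FNE i₀ j₀ k₀ k '' JN i₀ j₀ k₀ k := by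
  ext x
  constructor
  · intro hx
    obtain ⟨⟨i, j⟩, b⟩ := x
    obtain ⟨hi, hj, hα, hβ, hb, -⟩ := fwd_NE i₀ j₀ k₀ hstep hx
    have hJ : (i₀, j) ∈ innerF i₀ j₀ k₀ k :=
      rowIntR i₀ j₀ k₀ hstep hα le_rfl hi
    refine ⟨j, ⟨hj, hJ⟩, ?_⟩
    obtain ⟨hmem, hmax⟩ := gRow_spec i₀ j₀ k₀ hfund j ⟨i₀, hJ⟩
    have h1 : i ≤ gRow i₀ j₀ k₀ k j := hmax _ hα
    have h2 : ¬(i + 1 ≤ gRow i₀ j₀ k₀ k j) := fun hle =>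
      hβ (rowIntR i₀ j₀ k₀ hstep hmem (by omega) hle)
    have heq : gRow i₀ j₀ k₀ k j = i := by omega
    show (((gRow i₀ j₀ k₀ k j, j),
        bNE i₀ j₀ k₀ k (gRow i₀ j₀ k₀ k j, j)) : Vtx) = ((i, j), b)
    rw [heq, hb]
  · rintro ⟨j, ⟨hj, hJ⟩, rfl⟩
    exact ex_NE i₀ j₀ k₀ hstep hfund hj hJ

lemma ncard_SW (hstep : SteppedSurface k) (hfund : ∀ f : ℤ × ℤ, fund f ≤ k f) :
    (VleftSW i₀ j₀ k (EG i₀ j₀ k₀ k)).ncard = (JS i₀ j₀ k₀ k).ncard := by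
  rw [setEq_SW i₀ j₀ k₀ hstep hfund]
  apply Set.ncard_image_of_injOn
  intro x _ y _ hxy
  simpa [FSW] using congrArg (fun v : Vtx => v.1.2) hxy

lemma ncard_SE (hstep : SteppedSurface k) (hfund : ∀ f : ℤ × ℤ, fund f ≤ k f) :
    (VrightSE i₀ j₀ k (EG i₀ j₀ k₀ k)).ncard = (JS i₀ j₀ k₀ k).ncard := by
  rw [setEq_SE i₀ j₀ k₀ hstep hfund]
  apply Set.ncard_image_of_injOn
  intro x _ y _ hxy
  simpa [FSE] using congrArg (fun v : Vtx => v.1.2) hxy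

lemma ncard_NW (hstep : SteppedSurface k) (hfund : ∀ f : ℤ × ℤ, fund f ≤ k f) :
    (VleftNW i₀ j₀ k (EG i₀ j₀ k₀ k)).ncard = (JN i₀ j₀ k₀ k).ncard := by
  rw [setEq_NW i₀ j₀ k₀ hstep hfund]
  apply Set.ncard_image_of_injOn
  intro x _ y _ hxy
  simpa [FNW] using congrArg (fun v : Vtx => v.1.2) hxy

lemma ncard_NE (hstep : SteppedSurface k) (hfund : ∀ f : ℤ × ℤ, fund f ≤ k f) :
    (VrightNE i₀ j₀ k (EG i₀ j₀ k₀ k)).ncard = (JN i₀ j₀ k₀ k).ncard := by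
  rw [setEq_NE i₀ j₀ k₀ hstep hfund]
  apply Set.ncard_image_of_injOn
  intro x _ y _ hxy
  simpa [FNE] using congrArg (fun v : Vtx => v.1.2) hxy

end BoundaryProof

/-- **Boundary structure of `G`** (Proposition `prop_g`): (1) every vertex in
`V_leftSW(G) ∪ V_rightNE(G)` is black; (2) every vertex in `V_rightSE(G) ∪ V_leftNW(G)`
is white; (3) `|V_leftSW(G)| = |V_rightSE(G)|`; (4) `|V_leftNW(G)| = |V_rightNE(G)|`. -/
theorem boundary_structure
    (i₀ j₀ k₀ : ℤ) (k : ℤ × ℤ → ℤ)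
    (hstep : SteppedSurface k)
    (hodd : Odd (i₀ + j₀ + k₀))
    (hoddk : ∀ f : ℤ × ℤ, Odd (f.1 + f.2 + k f))
    (hk0 : k (i₀, j₀) ≤ k₀)
    (hfund : ∀ f : ℤ × ℤ, fund f ≤ k f)
    :
    (∀ x ∈ VleftSW i₀ j₀ k (EG i₀ j₀ k₀ k) ∪ VrightNE i₀ j₀ k (EG i₀ j₀ k₀ k),
        isWhite k x = false) ∧
    (∀ x ∈ VrightSE i₀ j₀ k (EG i₀ j₀ k₀ k) ∪ VleftNW i₀ j₀ k (EG i₀ j₀ k₀ k),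
        isWhite k x = true) ∧
    (VleftSW i₀ j₀ k (EG i₀ j₀ k₀ k)).ncard = (VrightSE i₀ j₀ k (EG i₀ j₀ k₀ k)).ncard ∧
    (VleftNW i₀ j₀ k (EG i₀ j₀ k₀ k)).ncard = (VrightNE i₀ j₀ k (EG i₀ j₀ k₀ k)).ncard := by
  refine ⟨?_, ?_, ?_, ?_⟩
  · rintro ⟨⟨i, j⟩, b⟩ (hx | hx)
    · exact (fwd_SW i₀ j₀ k₀ hstep hx).2.2.2.2.2
    · exact (fwd_NE i₀ j₀ k₀ hstep hx).2.2.2.2.2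
  · rintro ⟨⟨i, j⟩, b⟩ (hx | hx)
    · exact (fwd_SE i₀ j₀ k₀ hstep hx).2.2.2.2.2
    · exact (fwd_NW i₀ j₀ k₀ hstep hx).2.2.2.2.2
  · rw [ncard_SW i₀ j₀ k₀ hstep hfund, ncard_SE i₀ j₀ k₀ hstep hfund]
  · rw [ncard_NW i₀ j₀ k₀ hstep hfund, ncard_NE i₀ j₀ k₀ hstep hfund]


end OctahedronTSystem
end
end

section
/- I–J exchange identity (key step in the proof of Proposition 3.5): For every commutative monoid C, every function c : ℤ×ℤ → C, and every (i,j,m) ∈ ℤ³, one has I(i,j,m−1)·J(i,j−1,m)·J(i,j+1,m)·I(i,j,m+1) = J(i,j,m−1)·I(i−1,j,m)·I(i+1,j,m)·J(i,j,m+1); equivalently, in a commutative group, ( I(i,j,m−1)·J(i,j−1,m)·J(i,j+1,m) ) / ( J(i,j,m−1)·I(i−1,j,m)·I(i+1,j,m) ) = J(i,j,m+1)/I(i,j,m+1). -/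
noncomputable section
open Classical

namespace OctahedronTSystem

private lemma dIoc (p q r : ℤ) : Disjoint (Finset.Ioc p q) (Finset.Ioc q r) := by
  rw [Finset.disjoint_left]; intro x hx hx'
  simp only [Finset.mem_Ioc] at hx hx'; omega

private lemma key {C : Type*} [CommMonoid C] (f : ℤ → C) (p q : ℤ) (h : p + 2 ≤ q) :
    (∏ x ∈ Finset.Ioc p q, f x) * ∏ x ∈ Finset.Ioc (p+2) (q+2), f x =
    (∏ x ∈ Finset.Ioc (p+2) q, f x) * ∏ x ∈ Finset.Ioc p (q+2), f x := by
  rw [← Finset.Ioc_union_Ioc_eq_Ioc (show p ≤ p+2 by omega) h,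
      ← Finset.Ioc_union_Ioc_eq_Ioc (show p ≤ p+2 by omega) (show p+2 ≤ q+2 by omega),
      Finset.prod_union (dIoc p (p+2) q), Finset.prod_union (dIoc p (p+2) (q+2))]
  rw [mul_assoc]; exact mul_left_comm _ _ _

private lemma shift_prod {C : Type*} [CommMonoid C] (f : ℤ → C) (l u t : ℤ) :
    ∏ x ∈ Finset.Icc (l+t) (u+t), f x = ∏ x ∈ Finset.Icc l u, f (x + t) := by
  rw [← Finset.map_add_right_Icc, Finset.prod_map]; rfl

private lemma Icc_eq_Ioc (a b : ℤ) : Finset.Icc a b = Finset.Ioc (a - 1) b := by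
  ext x; simp only [Finset.mem_Icc, Finset.mem_Ioc]; omega

private lemma master {C : Type*} [CommMonoid C] (f g : ℤ → C) (hfg : f 0 = g 0) (m : ℤ) :
    (∏ x ∈ Finset.Icc m (-m), g x) * (∏ x ∈ Finset.Icc (-m-1) (m-1), f x) *
      (∏ x ∈ Finset.Icc (-m+1) (m+1), f x) * (∏ x ∈ Finset.Icc (m+2) (-m-2), g x) =
    (∏ x ∈ Finset.Icc (-m+1) (m-1), f x) * (∏ x ∈ Finset.Icc m (-m-2), g x) *
      (∏ x ∈ Finset.Icc (m+2) (-m), g x) * (∏ x ∈ Finset.Icc (-m-1) (m+1), f x) := by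
  rcases (show 1 ≤ m ∨ m = 0 ∨ m = -1 ∨ m ≤ -2 by omega) with hm | hm | hm | hm
  · rw [Finset.Icc_eq_empty (show ¬ (m ≤ -m) by omega),
        Finset.Icc_eq_empty (show ¬ (m+2 ≤ -m-2) by omega),
        Finset.Icc_eq_empty (show ¬ (m ≤ -m-2) by omega),
        Finset.Icc_eq_empty (show ¬ (m+2 ≤ -m) by omega), Finset.prod_empty]
    simp only [one_mul, mul_one]
    have h := key f (-m-2) (m-1) (by omega)
    rw [show (-m-2)+2 = -m by ring, show (m-1)+2 = m+1 by ring] at h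
    rw [Icc_eq_Ioc (-m-1) (m-1), Icc_eq_Ioc (-m+1) (m+1), Icc_eq_Ioc (-m+1) (m-1),
        Icc_eq_Ioc (-m-1) (m+1), show (-m-1)-1 = -m-2 by ring, show (-m+1)-1 = -m by ring]
    exact h
  · subst hm
    norm_num [Finset.Icc_self, Finset.Icc_eq_empty_of_lt,
      show Finset.Icc (-1:ℤ) 1 = {-1, 0, 1} from by decide]
    rw [hfg]; ring_nf
    rw [mul_comm (g 0), mul_assoc]
  · subst hm
    norm_num [Finset.Icc_self, Finset.Icc_eq_empty_of_lt,
      show Finset.Icc (-1:ℤ) 1 = {-1, 0, 1} from by decide]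
    rw [hfg]; ring_nf
    rw [mul_comm (g 0) (g 1), ← mul_assoc]
  · rw [Finset.Icc_eq_empty (show ¬ (-m-1 ≤ m-1) by omega),
        Finset.Icc_eq_empty (show ¬ (-m+1 ≤ m+1) by omega),
        Finset.Icc_eq_empty (show ¬ (-m+1 ≤ m-1) by omega),
        Finset.Icc_eq_empty (show ¬ (-m-1 ≤ m+1) by omega), Finset.prod_empty]
    simp only [one_mul, mul_one]
    have h := key g (m-1) (-m-2) (by omega)
    rw [show (m-1)+2 = m+1 by ring, show (-m-2)+2 = -m by ring] at h
    rw [Icc_eq_Ioc m (-m), Icc_eq_Ioc (m+2) (-m-2), Icc_eq_Ioc m (-m-2),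
        Icc_eq_Ioc (m+2) (-m), show m-1 = m-1 by ring, show (m+2)-1 = m+1 by ring]
    rw [mul_comm]
    exact h.symm

/-- The I–J exchange identity: for every commutative monoid `C`, every `c : ℤ×ℤ → C` and
every `(i,j,m)`, one has
`I(i,j,m-1)·J(i,j-1,m)·J(i,j+1,m)·I(i,j,m+1) = J(i,j,m-1)·I(i-1,j,m)·I(i+1,j,m)·J(i,j,m+1)`;
equivalently, in a commutative group,
`I(i,j,m-1)·J(i,j-1,m)·J(i,j+1,m) / (J(i,j,m-1)·I(i-1,j,m)·I(i+1,j,m)) = J(i,j,m+1)/I(i,j,m+1)`. -/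
theorem IJ_exchange_identity :
    (∀ (C : Type) [CommMonoid C] (c : ℤ × ℤ → C) (i j m : ℤ),
        coefI c i j (m - 1) * coefJ c i (j - 1) m * coefJ c i (j + 1) m *
            coefI c i j (m + 1) =
          coefJ c i j (m - 1) * coefI c (i - 1) j m * coefI c (i + 1) j m *
            coefJ c i j (m + 1)) ∧
    (∀ (G : Type) [CommGroup G] (c : ℤ × ℤ → G) (i j m : ℤ),
        coefI c i j (m - 1) * coefJ c i (j - 1) m * coefJ c i (j + 1) m /
            (coefJ c i j (m - 1) * coefI c (i - 1) j m * coefI c (i + 1) j m) =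
          coefJ c i j (m + 1) / coefI c i j (m + 1)) := by
  have main : ∀ (C : Type) [CommMonoid C] (c : ℤ × ℤ → C) (i j m : ℤ),
      coefI c i j (m - 1) * coefJ c i (j - 1) m * coefJ c i (j + 1) m *
          coefI c i j (m + 1) =
        coefJ c i j (m - 1) * coefI c (i - 1) j m * coefI c (i + 1) j m *
          coefJ c i j (m + 1) := by
    intro C _ c i j m
    set f : ℤ → C := fun a => c (i, j + a) with hf
    set g : ℤ → C := fun a => c (i + a, j) with hg
    have hfg : f 0 = g 0 := by simp [hf, hg]
    have e1 : coefI c i j (m - 1) = ∏ x ∈ Finset.Icc m (-m), g x := by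
      rw [coefI, show m - 1 + 1 = m by ring, show -(m-1) - 1 = -m by ring]
    have e2 : coefJ c i (j - 1) m = ∏ x ∈ Finset.Icc (-m-1) (m-1), f x := by
      have h := shift_prod f (-m) m (-1)
      rw [show -m + (-1) = -m-1 by ring, show m + (-1) = m-1 by ring] at h
      rw [coefJ, h]
      exact Finset.prod_congr rfl fun a _ => by
        simp only [hf]; rw [show j + (a + (-1)) = j - 1 + a by ring]
    have e3 : coefJ c i (j + 1) m = ∏ x ∈ Finset.Icc (-m+1) (m+1), f x := by
      have h := shift_prod f (-m) m 1
      rw [coefJ, h]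
      exact Finset.prod_congr rfl fun a _ => by
        simp only [hf]; rw [show j + (a + 1) = j + 1 + a by ring]
    have e4 : coefI c i j (m + 1) = ∏ x ∈ Finset.Icc (m+2) (-m-2), g x := by
      rw [coefI, show m + 1 + 1 = m + 2 by ring, show -(m+1) - 1 = -m-2 by ring]
    have e5 : coefJ c i j (m - 1) = ∏ x ∈ Finset.Icc (-m+1) (m-1), f x := by
      rw [coefJ, show -(m-1) = -m+1 by ring]
    have e6 : coefI c (i - 1) j m = ∏ x ∈ Finset.Icc m (-m-2), g x := by
      have h := shift_prod g (m+1) (-m-1) (-1)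
      rw [show m + 1 + (-1) = m by ring, show -m-1 + (-1) = -m-2 by ring] at h
      rw [coefI, h]
      exact Finset.prod_congr rfl fun a _ => by
        simp only [hg]; rw [show i + (a + (-1)) = i - 1 + a by ring]
    have e7 : coefI c (i + 1) j m = ∏ x ∈ Finset.Icc (m+2) (-m), g x := by
      have h := shift_prod g (m+1) (-m-1) 1
      rw [show m + 1 + 1 = m + 2 by ring, show -m-1 + 1 = -m by ring] at h
      rw [coefI, h]
      exact Finset.prod_congr rfl fun a _ => by
        simp only [hg]; rw [show i + (a + 1) = i + 1 + a by ring]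
    have e8 : coefJ c i j (m + 1) = ∏ x ∈ Finset.Icc (-m-1) (m+1), f x := by
      rw [coefJ, show -(m+1) = -m-1 by ring]
    rw [e1, e2, e3, e4, e5, e6, e7, e8]
    exact master f g hfg m
  refine ⟨main, fun G _ c i j m => ?_⟩
  rw [div_eq_div_iff_mul_eq_mul]
  calc coefI c i j (m - 1) * coefJ c i (j - 1) m * coefJ c i (j + 1) m * coefI c i j (m + 1)
      = coefJ c i j (m - 1) * coefI c (i - 1) j m * coefI c (i + 1) j m * coefJ c i j (m + 1) :=
        main G c i j m
    _ = coefJ c i j (m + 1) * (coefJ c i j (m - 1) * coefI c (i - 1) j m * coefI c (i + 1) j m) :=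
        mul_comm _ _

end OctahedronTSystem
end
end

section
/- Projected and adjusted surfaces are stepped surfaces: For any p = (i₀,j₀,k₀) ∈ ℤ³, the function proj_p(i,j) = k₀ − |i−i₀| − |j−j₀| is a stepped surface. Moreover, if k is a stepped surface with k(i₀,j₀) ≡ k₀ (mod 2), then the adjusted surface k_p(i,j) = min( k(i,j), proj_p(i,j) ) is again a stepped surface. -/
noncomputable section
open Classical

namespace OctahedronTSystem

lemma adjh (x y j : ℤ) (h : x = y + 1 ∨ y = x + 1) :
    |((x, j) : ℤ × ℤ).1 - ((y, j) : ℤ × ℤ).1| + |((x, j) : ℤ × ℤ).2 - ((y, j) : ℤ × ℤ).2| = 1 := by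
  simp only [sub_self, abs_zero, add_zero]
  rcases h with h | h <;> subst h <;> simp

lemma adjv (i x y : ℤ) (h : x = y + 1 ∨ y = x + 1) :
    |((i, x) : ℤ × ℤ).1 - ((i, y) : ℤ × ℤ).1| + |((i, x) : ℤ × ℤ).2 - ((i, y) : ℤ × ℤ).2| = 1 := by
  simp only [sub_self, abs_zero, zero_add]
  rcases h with h | h <;> subst h <;> simp

/-- min of two same-parity values, each stepping by 1, steps by 1. -/
lemma min_step (a b c d : ℤ) (hab : a % 2 = b % 2) (hac : |a - c| = 1)
    (hbd : |b - d| = 1) : |min a b - min c d| = 1 := by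
  rw [abs_eq (by norm_num : (0:ℤ) ≤ 1)] at hac hbd ⊢
  omega

/-- Parity of a stepped surface. -/
lemma parity_of_stepped (k : ℤ × ℤ → ℤ) (hk : SteppedSurface k) (i₀ j₀ : ℤ) :
    ∀ i j : ℤ, k (i, j) % 2 = (k (i₀, j₀) + i - i₀ + j - j₀) % 2 := by
  have step : ∀ a b : ℤ × ℤ, |a.1 - b.1| + |a.2 - b.2| = 1 → k a % 2 ≠ k b % 2 := by
    intro a b h
    have := hk a b h
    rw [abs_eq (by norm_num : (0:ℤ) ≤ 1)] at this
    omega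
  have col : ∀ i j : ℤ, k (i, j) % 2 = (k (i, j₀) + j - j₀) % 2 := by
    intro i j
    induction j using Int.induction_on with
    | zero =>
      have h0 : k (i, 0) % 2 = (k (i, j₀) + 0 - j₀) % 2 := by
        induction j₀ using Int.induction_on with
        | zero => simp
        | succ n ih =>
          have := step (i, (n:ℤ)) (i, (n:ℤ)+1) (adjv _ _ _ (Or.inr rfl))
          omega
        | pred n ih =>
          have := step (i, -(n:ℤ)) (i, -(n:ℤ)-1) (adjv _ _ _ (Or.inl (by ring)))
          omega
      exact h0
    | succ n ih =>
      have := step (i, (n:ℤ)+1) (i, (n:ℤ)) (adjv _ _ _ (Or.inl rfl))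
      omega
    | pred n ih =>
      have := step (i, -(n:ℤ)-1) (i, -(n:ℤ)) (adjv _ _ _ (Or.inr (by ring)))
      omega
  have row : ∀ i : ℤ, k (i, j₀) % 2 = (k (i₀, j₀) + i - i₀) % 2 := by
    intro i
    induction i using Int.induction_on with
    | zero =>
      induction i₀ using Int.induction_on with
      | zero => simp
      | succ n ih =>
        have := step ((n:ℤ), j₀) ((n:ℤ)+1, j₀) (adjh _ _ _ (Or.inr rfl))
        omega
      | pred n ih =>
        have := step (-(n:ℤ), j₀) (-(n:ℤ)-1, j₀) (adjh _ _ _ (Or.inl (by ring)))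
        omega
    | succ n ih =>
      have := step ((n:ℤ)+1, j₀) ((n:ℤ), j₀) (adjh _ _ _ (Or.inl rfl))
      omega
    | pred n ih =>
      have := step (-(n:ℤ)-1, j₀) (-(n:ℤ), j₀) (adjh _ _ _ (Or.inr (by ring)))
      omega
  intro i j
  have h1 := col i j
  have h2 := row i
  omega

/-- The surface projected from a point `p = (i₀,j₀,k₀)` is a stepped surface and, for any
stepped surface `k` with `k(i₀,j₀) ≡ k₀ (mod 2)`, the adjusted surface
`k_p = min (k, proj_p)` is again a stepped surface. -/
theorem proj_and_adjusted_are_stepped (i₀ j₀ k₀ : ℤ) :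
    SteppedSurface (fun v => k₀ - |v.1 - i₀| - |v.2 - j₀|) ∧
    ∀ k : ℤ × ℤ → ℤ, SteppedSurface k → k (i₀, j₀) ≡ k₀ [ZMOD 2] →
      SteppedSurface (fun v => min (k v) (k₀ - |v.1 - i₀| - |v.2 - j₀|)) := by
  have hproj : SteppedSurface (fun v => k₀ - |v.1 - i₀| - |v.2 - j₀|) := by
    intro a b h
    simp only
    rw [abs_eq (by norm_num : (0:ℤ) ≤ 1)]
    rcases abs_cases (a.1 - b.1) with ⟨e1, _⟩ | ⟨e1, _⟩ <;>
    rcases abs_cases (a.2 - b.2) with ⟨e2, _⟩ | ⟨e2, _⟩ <;>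
    rcases abs_cases (a.1 - i₀) with ⟨f1, _⟩ | ⟨f1, _⟩ <;>
    rcases abs_cases (a.2 - j₀) with ⟨f2, _⟩ | ⟨f2, _⟩ <;>
    rcases abs_cases (b.1 - i₀) with ⟨g1, _⟩ | ⟨g1, _⟩ <;>
    rcases abs_cases (b.2 - j₀) with ⟨g2, _⟩ | ⟨g2, _⟩ <;>
    omega
  refine ⟨hproj, ?_⟩
  intro k hk hmod
  intro a b h
  have habs : ∀ x : ℤ, (2:ℤ) ∣ x - |x| := by
    intro x
    rcases abs_cases x with ⟨e, _⟩ | ⟨e, _⟩ <;> omega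
  have hpar : ∀ v : ℤ × ℤ, k v % 2 = (k₀ - |v.1 - i₀| - |v.2 - j₀|) % 2 := by
    intro v
    have h1 : (2:ℤ) ∣ (k (i₀, j₀) + v.1 - i₀ + v.2 - j₀) - k v := by
      have := Int.ModEq.dvd (parity_of_stepped k hk i₀ j₀ v.1 v.2)
      rwa [Prod.mk.eta] at this
    have h2 := habs (v.1 - i₀)
    have h3 := habs (v.2 - j₀)
    have h4 : (2:ℤ) ∣ k₀ - k (i₀, j₀) := Int.ModEq.dvd hmod
    omega
  exact min_step _ _ _ _ (hpar a) (hk a b h) (hproj a b h)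

end OctahedronTSystem
end
end
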